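/- arXiv:2011.07790 — 4 statements merged into one kernel-verified Lean document; each statement's English description precedes it below -/
import Mathlib

section
/- Let k ≥ 2 be an integer, 0 < p < ∞, and let f be analytic on the open unit disc D. Then for every 0 < r < 1, (1/2π)∫₀^{2π} |W_k f(r e^{iθ})|^p dθ ≤ max(k^{1−p}, 1) · (1/2π)∫₀^{2π} |f(r e^{iθ})|^p dθ. Consequently ‖W_k f‖_{H^p} ≤ max(k^{1/p−1}, 1) ‖f‖_{H^p}. -/
open MeasureTheory
open scoped ENNReal

/-- Mean of `|f|^p` over the circle of radius `r` (normalized Lebesgue measure). -/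
noncomputable def hpInt (p : ℝ) (f : ℂ → ℂ) (r : ℝ) : ℝ≥0∞ :=
  (∫⁻ θ in Set.Ioc (0 : ℝ) (2 * Real.pi),
      ENNReal.ofReal (‖f ((r : ℂ) * Complex.exp ((θ : ℂ) * Complex.I))‖ ^ p)) /
    ENNReal.ofReal (2 * Real.pi)

/-- The Hardy space `H^p` norm of `f` on the unit disc. -/
noncomputable def hpNorm (p : ℝ) (f : ℂ → ℂ) : ℝ≥0∞ :=
  ⨆ r ∈ Set.Ioo (0 : ℝ) 1, hpInt p f r ^ (1 / p)

/-- The F. Wiener transform `W_k f(z) = (1/k) ∑_{j<k} f(ω_k^j z)`, `ω_k = exp(2πi/k)`. -/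
noncomputable def wiener (k : ℕ) (f : ℂ → ℂ) (z : ℂ) : ℂ :=
  (k : ℂ)⁻¹ * ∑ j ∈ Finset.range k,
    f (Complex.exp (2 * (Real.pi : ℂ) * Complex.I * (j : ℂ) / (k : ℂ)) * z)

/-- `Φ_k(p,t)`: the extremal quantity `sup { Re (f^{(k)}(0)/k!) }` over analytic `f` on the
unit disc with `‖f‖_{H^p} ≤ 1` and `f(0) = t`. -/
noncomputable def Phi (k : ℕ) (p t : ℝ) : ℝ :=
  sSup { x : ℝ | ∃ f : ℂ → ℂ, DifferentiableOn ℂ f (Metric.ball 0 1) ∧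
    hpNorm p f ≤ 1 ∧ f 0 = (t : ℂ) ∧ x = (iteratedDeriv k f 0 / (Nat.factorial k : ℂ)).re }

/-- Shifting a periodic `ℝ≥0∞`-valued function does not change its lower integral over a
period interval. -/
private lemma lintegral_Ioc_shift {T : ℝ} (hT : 0 < T) (H : ℝ → ℝ≥0∞)
    (hH : Function.Periodic H T) (c : ℝ) :
    ∫⁻ θ in Set.Ioc 0 T, H (θ + c) = ∫⁻ θ in Set.Ioc 0 T, H θ := by
  haveI : Fact (0 < T) := ⟨hT⟩
  have A := AddCircle.lintegral_preimage T 0 (fun b => hH.lift (b + (c : AddCircle T)))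
  have B := AddCircle.lintegral_preimage T 0 (fun b => hH.lift b)
  rw [zero_add] at A B
  have e1 : (∫⁻ θ in Set.Ioc (0:ℝ) T, H (θ + c)) =
      ∫⁻ θ in Set.Ioc (0:ℝ) T, (fun b : AddCircle T => hH.lift (b + (c : AddCircle T))) θ := by
    refine lintegral_congr fun θ => ?_
    simp only
    rw [← QuotientAddGroup.mk_add, hH.lift_coe]
  have e2 : (∫⁻ θ in Set.Ioc (0:ℝ) T, H θ) =
      ∫⁻ θ in Set.Ioc (0:ℝ) T, (fun b : AddCircle T => hH.lift b) θ := by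
    refine lintegral_congr fun θ => ?_
    simp only [hH.lift_coe]
  rw [e1, e2, A, B]
  exact lintegral_add_right_eq_self hH.lift _

private lemma sum_rpow_le' {ι : Type*} (s : Finset ι) (b : ι → ℝ≥0∞) {p : ℝ}
    (hp : 0 < p) (hp1 : p ≤ 1) : (∑ i ∈ s, b i) ^ p ≤ ∑ i ∈ s, b i ^ p := by
  induction s using Finset.cons_induction with
  | empty => simp [ENNReal.zero_rpow_of_pos hp]
  | cons i s his ih =>
    rw [Finset.sum_cons, Finset.sum_cons]
    exact le_trans (ENNReal.rpow_add_le_add_rpow _ _ hp.le hp1) (add_le_add le_rfl ih)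

/-- The key mean inequality: `((1/k) ∑ b_j)^p ≤ max(k^{1-p},1)/k ∑ b_j^p`. -/
private lemma key_mean (k : ℕ) (hk : 2 ≤ k) {p : ℝ} (hp : 0 < p) (b : ℕ → ℝ≥0∞) :
    ((k : ℝ≥0∞)⁻¹ * ∑ j ∈ Finset.range k, b j) ^ p
      ≤ ENNReal.ofReal (max ((k : ℝ) ^ (1 - p)) 1) * (k : ℝ≥0∞)⁻¹
          * ∑ j ∈ Finset.range k, b j ^ p := by
  have hk0 : (k : ℝ≥0∞) ≠ 0 := by
    simp only [ne_eq, Nat.cast_eq_zero]; omega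
  have hkt : (k : ℝ≥0∞) ≠ ⊤ := ENNReal.natCast_ne_top k
  set C : ℝ≥0∞ := ENNReal.ofReal (max ((k : ℝ) ^ (1 - p)) 1) with hC
  rcases le_total 1 p with hp1 | hp1
  · -- case 1 ≤ p : Jensen
    have hw : ∑ _j ∈ Finset.range k, (k : ℝ≥0∞)⁻¹ = 1 := by
      rw [Finset.sum_const, Finset.card_range, nsmul_eq_mul, ENNReal.mul_inv_cancel hk0 hkt]
    have h := ENNReal.rpow_arith_mean_le_arith_mean_rpow (Finset.range k)
      (fun _ => (k : ℝ≥0∞)⁻¹) b hw hp1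
    have hC1 : (1 : ℝ≥0∞) ≤ C := by
      rw [hC, ← ENNReal.ofReal_one]
      exact ENNReal.ofReal_le_ofReal (le_max_right _ _)
    calc ((k : ℝ≥0∞)⁻¹ * ∑ j ∈ Finset.range k, b j) ^ p
        = (∑ j ∈ Finset.range k, (k : ℝ≥0∞)⁻¹ * b j) ^ p := by rw [Finset.mul_sum]
      _ ≤ ∑ j ∈ Finset.range k, (k : ℝ≥0∞)⁻¹ * b j ^ p := h
      _ = (k : ℝ≥0∞)⁻¹ * ∑ j ∈ Finset.range k, b j ^ p := by rw [Finset.mul_sum]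
      _ ≤ C * (k : ℝ≥0∞)⁻¹ * ∑ j ∈ Finset.range k, b j ^ p := by
          rw [mul_assoc]
          exact le_mul_of_one_le_left' hC1
  · -- case p ≤ 1 : subadditivity
    have h1 : ((k : ℝ≥0∞)⁻¹) ^ p ≤ C * (k : ℝ≥0∞)⁻¹ := by
      have e1 : ((k : ℝ≥0∞)⁻¹) ^ p = (k : ℝ≥0∞) ^ (-p) := by
        rw [← ENNReal.rpow_neg_one, ← ENNReal.rpow_mul, neg_one_mul]
      have e2 : (k : ℝ≥0∞) ^ (1 - p) ≤ C := by
        rw [hC, ← ENNReal.ofReal_natCast k,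
          ENNReal.ofReal_rpow_of_nonneg (by positivity) (by linarith)]
        exact ENNReal.ofReal_le_ofReal (le_max_left _ _)
      calc ((k : ℝ≥0∞)⁻¹) ^ p = (k : ℝ≥0∞) ^ (-p) := e1
        _ = (k : ℝ≥0∞) ^ (1 - p) * (k : ℝ≥0∞) ^ (-1 : ℝ) := by
            rw [← ENNReal.rpow_add _ _ hk0 hkt]; ring_nf
        _ = (k : ℝ≥0∞) ^ (1 - p) * (k : ℝ≥0∞)⁻¹ := by rw [ENNReal.rpow_neg_one]
        _ ≤ C * (k : ℝ≥0∞)⁻¹ := mul_le_mul_left e2 _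
    calc ((k : ℝ≥0∞)⁻¹ * ∑ j ∈ Finset.range k, b j) ^ p
        = ((k : ℝ≥0∞)⁻¹) ^ p * (∑ j ∈ Finset.range k, b j) ^ p :=
          ENNReal.mul_rpow_of_nonneg _ _ hp.le
      _ ≤ ((k : ℝ≥0∞)⁻¹) ^ p * ∑ j ∈ Finset.range k, b j ^ p :=
          mul_le_mul_right (sum_rpow_le' _ _ hp hp1) _
      _ ≤ C * (k : ℝ≥0∞)⁻¹ * ∑ j ∈ Finset.range k, b j ^ p := mul_le_mul_left h1 _

theorem wiener_trick_norm_bound (k : ℕ) (hk : 2 ≤ k) (p : ℝ) (hp : 0 < p)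
    (f : ℂ → ℂ) (hf : DifferentiableOn ℂ f (Metric.ball 0 1)) :
    (∀ r ∈ Set.Ioo (0 : ℝ) 1,
      hpInt p (wiener k f) r ≤ ENNReal.ofReal (max ((k : ℝ) ^ (1 - p)) 1) * hpInt p f r)
    ∧ hpNorm p (wiener k f) ≤ ENNReal.ofReal (max ((k : ℝ) ^ (1 / p - 1)) 1) * hpNorm p f := by
  have hπ : 0 < 2 * Real.pi := by positivity
  have hk0 : (k : ℝ≥0∞) ≠ 0 := by simp only [ne_eq, Nat.cast_eq_zero]; omega
  have hkt : (k : ℝ≥0∞) ≠ ⊤ := ENNReal.natCast_ne_top k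
  have hkR : (0 : ℝ) < (k : ℝ) := by positivity
  set C : ℝ≥0∞ := ENNReal.ofReal (max ((k : ℝ) ^ (1 - p)) 1) with hCdef
  have main : ∀ r ∈ Set.Ioo (0 : ℝ) 1,
      hpInt p (wiener k f) r ≤ C * hpInt p f r := by
    rintro r ⟨hr0, hr1⟩
    set H : ℝ → ℝ≥0∞ := fun θ =>
      ENNReal.ofReal (‖f ((r : ℂ) * Complex.exp ((θ : ℂ) * Complex.I))‖ ^ p)
      with hHdef
    -- periodicity of H
    have hper : Function.Periodic H (2 * Real.pi) := by
      intro θ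
      have h1 : ((θ + 2 * Real.pi : ℝ) : ℂ) * Complex.I
          = (θ : ℂ) * Complex.I + 2 * (Real.pi : ℂ) * Complex.I := by push_cast; ring
      simp only [hHdef]
      rw [h1, Complex.exp_add, Complex.exp_two_pi_mul_I, mul_one]
    -- measurability of H
    have hc : Continuous fun θ : ℝ => (r : ℂ) * Complex.exp ((θ : ℂ) * Complex.I) :=
      continuous_const.mul (Complex.continuous_exp.comp
        (Complex.continuous_ofReal.mul continuous_const))
    have hmem : ∀ θ : ℝ, (r : ℂ) * Complex.exp ((θ : ℂ) * Complex.I) ∈ Metric.ball (0 : ℂ) 1 := by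
      intro θ
      have h1 : ‖Complex.exp ((θ : ℂ) * Complex.I)‖ = 1 := by
        rw [Complex.norm_exp]; simp [Complex.mul_re]
      simp only [Metric.mem_ball, dist_zero_right, norm_mul,
        Complex.norm_real, Real.norm_eq_abs, h1, mul_one]
      rwa [abs_of_pos hr0]
    have hHm : Measurable H := by
      have hfc : Continuous fun θ : ℝ => f ((r : ℂ) * Complex.exp ((θ : ℂ) * Complex.I)) :=
        hf.continuousOn.comp_continuous hc hmem
      exact (ENNReal.continuous_ofReal.comp
        ((continuous_norm.comp hfc).rpow_const fun x => Or.inr hp.le)).measurable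
    -- rewriting the rotated points
    have hz : ∀ (j : ℕ) (θ : ℝ),
        Complex.exp (2 * (Real.pi : ℂ) * Complex.I * (j : ℂ) / (k : ℂ)) *
          ((r : ℂ) * Complex.exp ((θ : ℂ) * Complex.I))
          = (r : ℂ) * Complex.exp (((θ + 2 * Real.pi * j / k : ℝ) : ℂ) * Complex.I) := by
      intro j θ
      have h1 : ((θ + 2 * Real.pi * j / k : ℝ) : ℂ) * Complex.I
          = 2 * (Real.pi : ℂ) * Complex.I * (j : ℂ) / (k : ℂ) + (θ : ℂ) * Complex.I := by
        push_cast
        have : (k : ℂ) ≠ 0 := by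
          simp only [ne_eq, Nat.cast_eq_zero]; omega
        field_simp
        ring
      rw [h1, Complex.exp_add]; ring
    -- pointwise bound
    have hpt : ∀ θ : ℝ,
        ENNReal.ofReal (
            ‖wiener k f ((r : ℂ) * Complex.exp ((θ : ℂ) * Complex.I))‖ ^ p)
          ≤ C * (k : ℝ≥0∞)⁻¹ * ∑ j ∈ Finset.range k, H (θ + 2 * Real.pi * j / k) := by
      intro θ
      set a : ℕ → ℝ := fun j =>
        ‖f ((r : ℂ) *
          Complex.exp (((θ + 2 * Real.pi * j / k : ℝ) : ℂ) * Complex.I))‖ with hadef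
      have ha0 : ∀ j, 0 ≤ a j := fun j => norm_nonneg _
      have habs :  ‖wiener k f ((r : ℂ) * Complex.exp ((θ : ℂ) * Complex.I))‖
          ≤ (k : ℝ)⁻¹ * ∑ j ∈ Finset.range k, a j := by
        rw [wiener, norm_mul, norm_inv, Complex.norm_natCast]
        refine mul_le_mul_of_nonneg_left ?_ (by positivity)
        refine le_trans (norm_sum_le _ _) (le_of_eq ?_)
        refine Finset.sum_congr rfl fun j _ => ?_
        rw [hz j θ]
      have hsum0 : 0 ≤ (k : ℝ)⁻¹ * ∑ j ∈ Finset.range k, a j := by positivity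
      calc ENNReal.ofReal (
              ‖wiener k f ((r : ℂ) * Complex.exp ((θ : ℂ) * Complex.I))‖ ^ p)
          ≤ ENNReal.ofReal (((k : ℝ)⁻¹ * ∑ j ∈ Finset.range k, a j) ^ p) :=
            ENNReal.ofReal_le_ofReal
              (Real.rpow_le_rpow (norm_nonneg _) habs hp.le)
        _ = (ENNReal.ofReal ((k : ℝ)⁻¹ * ∑ j ∈ Finset.range k, a j)) ^ p := by
            rw [ENNReal.ofReal_rpow_of_nonneg hsum0 hp.le]
        _ = ((k : ℝ≥0∞)⁻¹ * ∑ j ∈ Finset.range k, ENNReal.ofReal (a j)) ^ p := by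
            rw [ENNReal.ofReal_mul (by positivity),
              ENNReal.ofReal_sum_of_nonneg (fun j _ => ha0 j),
              ENNReal.ofReal_inv_of_pos hkR, ENNReal.ofReal_natCast]
        _ ≤ C * (k : ℝ≥0∞)⁻¹ * ∑ j ∈ Finset.range k, (ENNReal.ofReal (a j)) ^ p :=
            key_mean k hk hp _
        _ = C * (k : ℝ≥0∞)⁻¹ * ∑ j ∈ Finset.range k, H (θ + 2 * Real.pi * j / k) := by
            congr 1
            refine Finset.sum_congr rfl fun j _ => ?_
            rw [ENNReal.ofReal_rpow_of_nonneg (ha0 j) hp.le]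
    -- integrate
    have hWint : (∫⁻ θ in Set.Ioc (0 : ℝ) (2 * Real.pi),
        ENNReal.ofReal (
          ‖wiener k f ((r : ℂ) * Complex.exp ((θ : ℂ) * Complex.I))‖ ^ p))
        ≤ C * ∫⁻ θ in Set.Ioc (0 : ℝ) (2 * Real.pi), H θ := by
      have hCk : C * (k : ℝ≥0∞)⁻¹ ≠ ⊤ :=
        ENNReal.mul_ne_top ENNReal.ofReal_ne_top (ENNReal.inv_ne_top.mpr hk0)
      calc (∫⁻ θ in Set.Ioc (0 : ℝ) (2 * Real.pi),
            ENNReal.ofReal (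
              ‖wiener k f ((r : ℂ) * Complex.exp ((θ : ℂ) * Complex.I))‖ ^ p))
          ≤ ∫⁻ θ in Set.Ioc (0 : ℝ) (2 * Real.pi),
              C * (k : ℝ≥0∞)⁻¹ * ∑ j ∈ Finset.range k, H (θ + 2 * Real.pi * j / k) :=
            lintegral_mono hpt
        _ = C * (k : ℝ≥0∞)⁻¹ * ∫⁻ θ in Set.Ioc (0 : ℝ) (2 * Real.pi),
              ∑ j ∈ Finset.range k, H (θ + 2 * Real.pi * j / k) :=
            lintegral_const_mul' _ _ hCk
        _ = C * (k : ℝ≥0∞)⁻¹ * ∑ j ∈ Finset.range k,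
              ∫⁻ θ in Set.Ioc (0 : ℝ) (2 * Real.pi), H (θ + 2 * Real.pi * j / k) := by
            have hsum := lintegral_finset_sum
              (μ := volume.restrict (Set.Ioc (0 : ℝ) (2 * Real.pi)))
              (Finset.range k) (f := fun (j : ℕ) (θ : ℝ) => H (θ + 2 * Real.pi * j / k))
              (fun j _ => hHm.comp (measurable_add_const (2 * Real.pi * j / k)))
            rw [hsum]
        _ = C * (k : ℝ≥0∞)⁻¹ * ∑ _j ∈ Finset.range k,
              ∫⁻ θ in Set.Ioc (0 : ℝ) (2 * Real.pi), H θ := by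
            congr 1
            exact Finset.sum_congr rfl fun j _ => lintegral_Ioc_shift hπ H hper _
        _ = C * (k : ℝ≥0∞)⁻¹ * ((k : ℝ≥0∞) *
              ∫⁻ θ in Set.Ioc (0 : ℝ) (2 * Real.pi), H θ) := by
            rw [Finset.sum_const, Finset.card_range, nsmul_eq_mul]
        _ = C * ∫⁻ θ in Set.Ioc (0 : ℝ) (2 * Real.pi), H θ := by
            rw [mul_assoc, ← mul_assoc (k : ℝ≥0∞)⁻¹, ENNReal.inv_mul_cancel hk0 hkt, one_mul]
    show hpInt p (wiener k f) r ≤ C * hpInt p f r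
    have hWeq : hpInt p (wiener k f) r = (∫⁻ θ in Set.Ioc (0 : ℝ) (2 * Real.pi),
        ENNReal.ofReal (
          ‖wiener k f ((r : ℂ) * Complex.exp ((θ : ℂ) * Complex.I))‖ ^ p)) /
        ENNReal.ofReal (2 * Real.pi) := rfl
    have hFeq : hpInt p f r = (∫⁻ θ in Set.Ioc (0 : ℝ) (2 * Real.pi), H θ) /
        ENNReal.ofReal (2 * Real.pi) := rfl
    rw [hWeq, hFeq, ← mul_div_assoc]
    exact ENNReal.div_le_div_right hWint _
  refine ⟨fun r hr => main r hr, ?_⟩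
  -- the norm bound
  have hMp : (max ((k : ℝ) ^ (1 - p)) 1) ^ (1 / p) = max ((k : ℝ) ^ (1 / p - 1)) 1 := by
    have hk1 : (1 : ℝ) ≤ (k : ℝ) := by
      have : (1 : ℕ) ≤ k := by omega
      exact_mod_cast this
    rcases le_total p 1 with h | h
    · have h1 : (1 : ℝ) ≤ (k : ℝ) ^ (1 - p) := Real.one_le_rpow hk1 (by linarith)
      have hip : (1 : ℝ) ≤ 1 / p := by rw [le_div_iff₀ hp]; linarith
      have h2 : (1 : ℝ) ≤ (k : ℝ) ^ (1 / p - 1) := Real.one_le_rpow hk1 (by linarith)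
      rw [max_eq_left h1, max_eq_left h2, ← Real.rpow_mul (by positivity)]
      congr 1
      field_simp
    · have h1 : (k : ℝ) ^ (1 - p) ≤ 1 :=
        Real.rpow_le_one_of_one_le_of_nonpos hk1 (by linarith)
      have hip : 1 / p ≤ 1 := by rw [div_le_one hp]; linarith
      have h2 : (k : ℝ) ^ (1 / p - 1) ≤ 1 :=
        Real.rpow_le_one_of_one_le_of_nonpos hk1 (by linarith)
      rw [max_eq_right h1, max_eq_right h2, Real.one_rpow]
  rw [hpNorm]
  refine iSup₂_le fun r hr => ?_
  calc hpInt p (wiener k f) r ^ (1 / p)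
      ≤ (C * hpInt p f r) ^ (1 / p) := ENNReal.rpow_le_rpow (main r hr) (by positivity)
    _ = C ^ (1 / p) * hpInt p f r ^ (1 / p) := ENNReal.mul_rpow_of_nonneg _ _ (by positivity)
    _ = ENNReal.ofReal (max ((k : ℝ) ^ (1 / p - 1)) 1) * hpInt p f r ^ (1 / p) := by
        rw [hCdef, ENNReal.ofReal_rpow_of_nonneg (le_max_of_le_right zero_le_one)
          (by positivity), hMp]
    _ ≤ ENNReal.ofReal (max ((k : ℝ) ^ (1 / p - 1)) 1) * hpNorm p f := by
        refine mul_le_mul_right ?_ _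
        rw [hpNorm]
        exact le_iSup₂ (f := fun r (_ : r ∈ Set.Ioo (0 : ℝ) 1) => hpInt p f r ^ (1 / p)) r hr
end

section
/- Let k ≥ 2 be an integer and let f be a bounded analytic function on the open unit disc D. Suppose that for almost every θ ∈ [0,2π] the radial limit lim_{r→1⁻} f(re^{iθ}) exists and has modulus 1, and likewise for almost every θ the radial limit lim_{r→1⁻} W_k f(re^{iθ}) exists and has modulus 1 (i.e., both f and W_k f are inner functions). Then f = W_k f on D. -/
open MeasureTheory
open scoped ENNReal

open MeasureTheory Complex Filter Set Metric intervalIntegral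
open scoped Real

noncomputable def zeta (k : ℕ) : ℂ := Complex.exp (2 * Real.pi * Complex.I / k)

/-- circle point -/
noncomputable def cpt (r θ : ℝ) : ℂ := (r : ℂ) * Complex.exp ((θ : ℂ) * Complex.I)

lemma rot_coeff (k j : ℕ) :
    Complex.exp (2 * (Real.pi : ℂ) * Complex.I * (j : ℂ) / (k : ℂ)) = zeta k ^ j := by
  rw [zeta, ← Complex.exp_nat_mul]; ring_nf

lemma abs_zeta_pow (k j : ℕ) : ‖zeta k ^ j‖ = 1 := by
  rw [norm_pow, zeta]
  have : (2 * (Real.pi:ℂ) * Complex.I / k) = ((2 * Real.pi / k : ℝ) : ℂ) * Complex.I := by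
    push_cast; ring
  rw [this, Complex.norm_exp_ofReal_mul_I, one_pow]

lemma zeta_pow_self (k : ℕ) (hk : k ≠ 0) : zeta k ^ k = 1 := by
  rw [zeta, ← Complex.exp_nat_mul]
  have hkc : (k : ℂ) ≠ 0 := Nat.cast_ne_zero.mpr hk
  have : (k : ℂ) * (2 * Real.pi * Complex.I / k) = 2 * Real.pi * Complex.I := by
    field_simp
  rw [this]
  simpa using Complex.exp_int_mul_two_pi_mul_I 1

lemma wiener_eq (k : ℕ) (f : ℂ → ℂ) (z : ℂ) :
    wiener k f z = (k : ℂ)⁻¹ * ∑ j ∈ Finset.range k, f (zeta k ^ j * z) := by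
  simp [wiener, rot_coeff]

lemma wiener_sum (k : ℕ) (hk : k ≠ 0) (f : ℂ → ℂ) (z : ℂ) :
    ∑ j ∈ Finset.range k, f (zeta k ^ j * z) = (k : ℂ) * wiener k f z := by
  rw [wiener_eq]
  have hkc : (k : ℂ) ≠ 0 := Nat.cast_ne_zero.mpr hk
  field_simp
  exact Finset.sum_congr rfl fun j _ => by rw [mul_comm]

lemma wiener_rot (k : ℕ) (hk : k ≠ 0) (f : ℂ → ℂ) (z : ℂ) :
    wiener k f (zeta k * z) = wiener k f z := by
  rw [wiener_eq, wiener_eq]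
  congr 1
  have h1 : ∀ j : ℕ, f (zeta k ^ j * (zeta k * z)) = f (zeta k ^ (j + 1) * z) := by
    intro j; ring_nf
  calc ∑ j ∈ Finset.range k, f (zeta k ^ j * (zeta k * z))
      = ∑ j ∈ Finset.range k, f (zeta k ^ (j + 1) * z) := by
        exact Finset.sum_congr rfl fun j _ => h1 j
    _ = ∑ j ∈ Finset.range (k + 1), f (zeta k ^ j * z) - f (zeta k ^ 0 * z) := by
        rw [Finset.sum_range_succ']; ring
    _ = ∑ j ∈ Finset.range k, f (zeta k ^ j * z) := by
        rw [Finset.sum_range_succ, zeta_pow_self k hk, pow_zero]; ring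

lemma wiener_rot_pow (k : ℕ) (hk : k ≠ 0) (f : ℂ → ℂ) (j : ℕ) (z : ℂ) :
    wiener k f (zeta k ^ j * z) = wiener k f z := by
  induction j generalizing z with
  | zero => simp
  | succ n ih =>
      have : zeta k ^ (n + 1) * z = zeta k * (zeta k ^ n * z) := by ring
      rw [this, wiener_rot k hk, ih]

lemma variance_sum (k : ℕ) (v : ℕ → ℂ) (m : ℂ)
    (hm : ∑ j ∈ Finset.range k, v j = (k : ℂ) * m) :
    ∑ j ∈ Finset.range k, Complex.normSq (v j - m)
      = ∑ j ∈ Finset.range k, Complex.normSq (v j) - k * Complex.normSq m := by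
  have h1 : ∀ j, Complex.normSq (v j - m)
      = Complex.normSq (v j) - 2 * (v j * (starRingEnd ℂ) m).re + Complex.normSq m := by
    intro j; rw [Complex.normSq_sub]; ring
  rw [Finset.sum_congr rfl fun j _ => h1 j]
  rw [Finset.sum_add_distrib, Finset.sum_sub_distrib]
  have h2 : ∑ j ∈ Finset.range k, 2 * (v j * (starRingEnd ℂ) m).re
      = 2 * ((∑ j ∈ Finset.range k, v j) * (starRingEnd ℂ) m).re := by
    rw [Finset.sum_mul, Complex.re_sum, Finset.mul_sum]
  rw [h2, hm]
  have h3 : (((k : ℂ) * m) * (starRingEnd ℂ) m).re = (k : ℝ) * Complex.normSq m := by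
    rw [mul_assoc, Complex.mul_conj]
    simp [Complex.ofReal_natCast]
  rw [h3]
  simp [Finset.sum_const, Finset.card_range, nsmul_eq_mul]
  ring

lemma zeta_circle (k j : ℕ) (r θ : ℝ) :
    zeta k ^ j * cpt r θ = cpt r (θ + 2 * Real.pi * j / k) := by
  rw [cpt, cpt, zeta, ← Complex.exp_nat_mul, ← mul_assoc, mul_comm _ (r:ℂ), mul_assoc,
    ← Complex.exp_add]
  congr 2
  push_cast
  by_cases hk : (k : ℂ) = 0
  · simp [hk]
  · field_simp; ring

lemma integral_shift (G : ℝ → ℝ) (hG : ∀ θ : ℝ, G (θ + 2 * Real.pi) = G θ) (c : ℝ) :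
    (∫ θ in (0:ℝ)..(2 * Real.pi), G (θ + c)) = ∫ θ in (0:ℝ)..(2 * Real.pi), G θ := by
  rw [intervalIntegral.integral_comp_add_right]
  have hper : Function.Periodic G (2 * Real.pi) := hG
  rw [show 2 * Real.pi + c = c + 2 * Real.pi by ring]
  simpa using hper.intervalIntegral_add_eq c 0

lemma cpt_per (r θ : ℝ) : cpt r (θ + 2 * Real.pi) = cpt r θ := by
  rw [cpt, cpt]
  congr 1
  push_cast
  rw [add_mul, Complex.exp_add, Complex.exp_two_pi_mul_I, mul_one]

lemma cont_circle {F : ℂ → ℂ} (hF : ContinuousOn F (ball 0 1)) {r : ℝ} (hr : |r| < 1) :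
    Continuous fun θ : ℝ => F (cpt r θ) := by
  apply hF.comp_continuous
  · unfold cpt; fun_prop
  · intro θ
    rw [mem_ball_zero_iff]
    calc ‖cpt r θ‖
        = |r| * ‖Complex.exp ((θ:ℂ) * Complex.I)‖ := by
          rw [cpt, norm_mul, Complex.norm_real, Real.norm_eq_abs]
      _ = |r| := by rw [Complex.norm_exp_ofReal_mul_I, mul_one]
      _ < 1 := hr

lemma cpt_mem {r : ℝ} (hr : |r| < 1) (θ : ℝ) : cpt r θ ∈ ball (0:ℂ) 1 := by
  rw [mem_ball_zero_iff]
  calc ‖cpt r θ‖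
      = |r| * ‖Complex.exp ((θ:ℂ) * Complex.I)‖ := by
        rw [cpt, norm_mul, Complex.norm_real, Real.norm_eq_abs]
    _ = |r| := by rw [Complex.norm_exp_ofReal_mul_I, mul_one]
    _ < 1 := hr

lemma unit_mul_mem {c z : ℂ} (hc : ‖c‖ = 1) (hz : z ∈ ball (0:ℂ) 1) :
    c * z ∈ ball (0:ℂ) 1 := by
  rw [mem_ball_zero_iff] at hz ⊢
  calc ‖c * z‖ = ‖c‖ * ‖z‖ := by rw [norm_mul]
    _ = ‖z‖ := by rw [hc, one_mul]
    _ < 1 := hz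

lemma abs_rot (k j : ℕ) :
    ‖Complex.exp (2 * (Real.pi : ℂ) * Complex.I * (j : ℂ) / (k : ℂ))‖ = 1 := by
  rw [rot_coeff]; exact abs_zeta_pow k j

lemma wiener_diffOn (k : ℕ) {f : ℂ → ℂ} (hf : DifferentiableOn ℂ f (ball 0 1)) :
    DifferentiableOn ℂ (wiener k f) (ball 0 1) := by
  unfold wiener
  apply DifferentiableOn.const_mul
  apply DifferentiableOn.fun_sum
  intro j _
  exact hf.comp ((differentiable_id.const_mul _).differentiableOn)
    fun z hz => unit_mul_mem (abs_rot k j) hz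

lemma wiener_bound (k : ℕ) (hk : k ≠ 0) {f : ℂ → ℂ} {M : ℝ}
    (hM : ∀ z ∈ ball (0:ℂ) 1, ‖f z‖ ≤ M) :
    ∀ z ∈ ball (0:ℂ) 1, ‖wiener k f z‖ ≤ M := by
  intro z hz
  unfold wiener
  calc ‖(k : ℂ)⁻¹ * ∑ j ∈ Finset.range k,
        f (Complex.exp (2 * (Real.pi : ℂ) * Complex.I * (j : ℂ) / (k : ℂ)) * z)‖
      ≤ (k : ℝ)⁻¹ * ∑ j ∈ Finset.range k,
          ‖f (Complex.exp (2 * (Real.pi : ℂ) * Complex.I * (j : ℂ) / (k : ℂ)) * z)‖ := by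
        rw [norm_mul, norm_inv, Complex.norm_natCast]
        gcongr
        exact norm_sum_le _ _
      _ ≤ (k : ℝ)⁻¹ * ∑ j ∈ Finset.range k, M := by
        gcongr with j hj
        exact hM _ (unit_mul_mem (abs_rot k j) hz)
      _ = M := by
        rw [Finset.sum_const, Finset.card_range, nsmul_eq_mul, ← mul_assoc,
          inv_mul_cancel₀ (by exact_mod_cast hk), one_mul]

lemma key_identity (k : ℕ) (hk : k ≠ 0) (f : ℂ → ℂ)
    (hf : ContinuousOn f (ball 0 1)) (hg : ContinuousOn (wiener k f) (ball 0 1))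
    {r : ℝ} (hr : |r| < 1) :
    (∫ θ in (0:ℝ)..(2 * Real.pi),
        Complex.normSq (f (cpt r θ) - wiener k f (cpt r θ)))
      = (∫ θ in (0:ℝ)..(2 * Real.pi), Complex.normSq (f (cpt r θ)))
        - ∫ θ in (0:ℝ)..(2 * Real.pi), Complex.normSq (wiener k f (cpt r θ)) := by
  set g := wiener k f with hgdef
  set Hh : ℝ → ℝ := fun θ => Complex.normSq (f (cpt r θ) - g (cpt r θ)) with hHh
  set Hf : ℝ → ℝ := fun θ => Complex.normSq (f (cpt r θ)) with hHf
  set Hg : ℝ → ℝ := fun θ => Complex.normSq (g (cpt r θ)) with hHg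
  have hHh_cont : Continuous Hh :=
    Complex.continuous_normSq.comp ((cont_circle hf hr).sub (cont_circle hg hr))
  have hHf_cont : Continuous Hf := Complex.continuous_normSq.comp (cont_circle hf hr)
  have hHg_cont : Continuous Hg := Complex.continuous_normSq.comp (cont_circle hg hr)
  have hHh_per : ∀ θ, Hh (θ + 2 * Real.pi) = Hh θ := by intro θ; simp [Hh, cpt_per]
  have hHf_per : ∀ θ, Hf (θ + 2 * Real.pi) = Hf θ := by intro θ; simp [Hf, cpt_per]
  -- pointwise identity
  have pointwise : ∀ θ : ℝ,
      (∑ j ∈ Finset.range k, Hh (θ + 2 * Real.pi * j / k))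
        = (∑ j ∈ Finset.range k, Hf (θ + 2 * Real.pi * j / k)) - k * Hg θ := by
    intro θ
    have hvm := wiener_sum k hk f (cpt r θ)
    have hv := variance_sum k (fun j => f (zeta k ^ j * cpt r θ)) (g (cpt r θ)) hvm
    have e1 : ∀ j : ℕ, Complex.normSq (f (zeta k ^ j * cpt r θ) - g (cpt r θ))
        = Hh (θ + 2 * Real.pi * j / k) := by
      intro j
      have : g (cpt r θ) = g (zeta k ^ j * cpt r θ) := (wiener_rot_pow k hk f j _).symm
      rw [this, zeta_circle]
    have e2 : ∀ j : ℕ, Complex.normSq (f (zeta k ^ j * cpt r θ))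
        = Hf (θ + 2 * Real.pi * j / k) := by
      intro j; rw [zeta_circle]
    rw [← Finset.sum_congr rfl fun j _ => e1 j, ← Finset.sum_congr rfl fun j _ => e2 j]
    exact hv
  -- integrate
  have int_shift_h : ∀ j : ℕ,
      (∫ θ in (0:ℝ)..(2 * Real.pi), Hh (θ + 2 * Real.pi * j / k))
        = ∫ θ in (0:ℝ)..(2 * Real.pi), Hh θ := fun j => integral_shift Hh hHh_per _
  have int_shift_f : ∀ j : ℕ,
      (∫ θ in (0:ℝ)..(2 * Real.pi), Hf (θ + 2 * Real.pi * j / k))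
        = ∫ θ in (0:ℝ)..(2 * Real.pi), Hf θ := fun j => integral_shift Hf hHf_per _
  have intg_h : ∀ j : ℕ, IntervalIntegrable (fun θ => Hh (θ + 2 * Real.pi * j / k))
      volume 0 (2 * Real.pi) :=
    fun j => (hHh_cont.comp (continuous_add_right _)).intervalIntegrable _ _
  have intg_f : ∀ j : ℕ, IntervalIntegrable (fun θ => Hf (θ + 2 * Real.pi * j / k))
      volume 0 (2 * Real.pi) :=
    fun j => (hHf_cont.comp (continuous_add_right _)).intervalIntegrable _ _
  have L : (∫ θ in (0:ℝ)..(2 * Real.pi), ∑ j ∈ Finset.range k, Hh (θ + 2 * Real.pi * j / k))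
      = (k : ℝ) * ∫ θ in (0:ℝ)..(2 * Real.pi), Hh θ := by
    rw [intervalIntegral.integral_finset_sum fun j _ => intg_h j]
    rw [Finset.sum_congr rfl fun j _ => int_shift_h j]
    simp [Finset.sum_const, Finset.card_range, nsmul_eq_mul]
  have R : (∫ θ in (0:ℝ)..(2 * Real.pi),
        ((∑ j ∈ Finset.range k, Hf (θ + 2 * Real.pi * j / k)) - k * Hg θ))
      = (k : ℝ) * (∫ θ in (0:ℝ)..(2 * Real.pi), Hf θ)
        - (k : ℝ) * ∫ θ in (0:ℝ)..(2 * Real.pi), Hg θ := by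
    have c1 : Continuous fun θ => ∑ j ∈ Finset.range k, Hf (θ + 2 * Real.pi * j / k) :=
      continuous_finset_sum _ fun j _ => hHf_cont.comp (continuous_add_right _)
    rw [intervalIntegral.integral_sub (g := fun θ => (k:ℝ) * Hg θ) (c1.intervalIntegrable _ _)
      ((continuous_const.mul hHg_cont : Continuous fun θ => (k:ℝ) * Hg θ).intervalIntegrable _ _)]
    rw [intervalIntegral.integral_finset_sum fun j _ => intg_f j]
    rw [Finset.sum_congr rfl fun j _ => int_shift_f j]
    rw [intervalIntegral.integral_const_mul]
    simp [Finset.sum_const, Finset.card_range, nsmul_eq_mul]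
  have main : (k : ℝ) * (∫ θ in (0:ℝ)..(2 * Real.pi), Hh θ)
      = (k : ℝ) * (∫ θ in (0:ℝ)..(2 * Real.pi), Hf θ)
        - (k : ℝ) * ∫ θ in (0:ℝ)..(2 * Real.pi), Hg θ := by
    rw [← L, ← R]
    apply intervalIntegral.integral_congr
    intro θ _
    exact pointwise θ
  have hkR : (k : ℝ) ≠ 0 := Nat.cast_ne_zero.mpr hk
  have := mul_left_cancel₀ hkR (by rw [main]; ring :
    (k : ℝ) * (∫ θ in (0:ℝ)..(2 * Real.pi), Hh θ)
      = (k : ℝ) * ((∫ θ in (0:ℝ)..(2 * Real.pi), Hf θ)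
        - ∫ θ in (0:ℝ)..(2 * Real.pi), Hg θ))
  exact this

lemma cauchy_bound {F : ℂ → ℂ} (hd : DifferentiableOn ℂ F (ball 0 1)) {R : ℝ}
    (hR0 : 0 < R) (hR1 : R < 1) {z₀ : ℂ} (hz : ‖z₀‖ < R) :
    ‖F z₀‖ ≤ (2 * Real.pi)⁻¹ * ((R / (R - ‖z₀‖)) *
      ∫ θ in (0:ℝ)..(2 * Real.pi), ‖F (cpt R θ)‖) := by
  have hsub : closedBall (0:ℂ) R ⊆ ball 0 1 := closedBall_subset_ball hR1
  have hdc : DiffContOnCl ℂ F (ball 0 R) :=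
    ⟨hd.mono (ball_subset_ball hR1.le),
      (hd.continuousOn).mono (by rw [closure_ball (0:ℂ) hR0.ne']; exact hsub)⟩
  have hz' : z₀ ∈ ball (0:ℂ) R := mem_ball_zero_iff.mpr hz
  have hcau := hdc.circleIntegral_sub_inv_smul hz'
  have hne : (2 * Real.pi * Complex.I : ℂ) ≠ 0 := by
    simp [Real.pi_ne_zero, Complex.I_ne_zero]
  have hFz : F z₀ = ((2 * Real.pi * Complex.I : ℂ))⁻¹ •
      ∮ z in C(0, R), (z - z₀)⁻¹ • F z := by
    rw [hcau, smul_smul, inv_mul_cancel₀ hne, one_smul]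
  have hd0 : 0 < R - ‖z₀‖ := by linarith
  have hRlt : |R| < 1 := by rw [abs_of_pos hR0]; exact hR1
  have hcont : Continuous fun θ : ℝ => ‖F (cpt R θ)‖ :=
    continuous_norm.comp (cont_circle hd.continuousOn hRlt)
  have hbound : ∀ θ : ℝ,
      ‖deriv (circleMap 0 R) θ • ((circleMap 0 R θ - z₀)⁻¹ • F (circleMap 0 R θ))‖
        ≤ (R / (R - ‖z₀‖)) * ‖F (cpt R θ)‖ := by
    intro θ
    have hcm : circleMap 0 R θ = cpt R θ := by rw [circleMap_zero, cpt]
    have hlow : R - ‖z₀‖ ≤ ‖circleMap 0 R θ - z₀‖ := by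
      have h1 : ‖circleMap 0 R θ‖ - ‖z₀‖ ≤ ‖circleMap 0 R θ - z₀‖ := norm_sub_norm_le _ _
      rw [norm_circleMap_zero, abs_of_pos hR0] at h1
      exact h1
    rw [norm_smul, norm_smul, deriv_circleMap]
    have h2 : ‖circleMap 0 R θ * Complex.I‖ = R := by
      rw [norm_mul, norm_circleMap_zero,
        Complex.norm_I, abs_of_pos hR0, mul_one]
    rw [h2, hcm]
    have h3 : ‖(circleMap 0 R θ - z₀)⁻¹‖ ≤ (R - ‖z₀‖)⁻¹ := by
      rw [norm_inv]
      exact inv_anti₀ hd0 hlow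
    calc R * (‖(cpt R θ - z₀)⁻¹‖ * ‖F (cpt R θ)‖)
        ≤ R * ((R - ‖z₀‖)⁻¹ * ‖F (cpt R θ)‖) := by
          rw [← hcm]
          gcongr
      _ = R / (R - ‖z₀‖) * ‖F (cpt R θ)‖ := by
          rw [div_eq_mul_inv]; ring
  calc ‖F z₀‖ = ‖((2 * Real.pi * Complex.I : ℂ))⁻¹‖ *
        ‖∮ z in C(0, R), (z - z₀)⁻¹ • F z‖ := by
        rw [← norm_smul, ← hFz]
    _ = (2 * Real.pi)⁻¹ * ‖∮ z in C(0, R), (z - z₀)⁻¹ • F z‖ := by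
        congr 1
        rw [norm_inv, norm_mul, norm_mul, Complex.norm_I, mul_one,
          Complex.norm_two, Complex.norm_real, Real.norm_eq_abs, abs_of_pos Real.pi_pos]
    _ ≤ (2 * Real.pi)⁻¹ * ((R / (R - ‖z₀‖)) *
        ∫ θ in (0:ℝ)..(2 * Real.pi), ‖F (cpt R θ)‖) := by
        gcongr
        calc ‖∮ z in C(0, R), (z - z₀)⁻¹ • F z‖
            ≤ |∫ θ in (0:ℝ)..(2 * Real.pi),
                (R / (R - ‖z₀‖)) * ‖F (cpt R θ)‖| := by
              rw [circleIntegral]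
              exact (intervalIntegral.norm_integral_le_of_norm_le (by positivity)
                (ae_of_all _ fun θ _ => hbound θ)
                (Continuous.intervalIntegrable (μ := MeasureTheory.volume) (continuous_const.mul hcont) _ _)).trans (le_abs_self _)
          _ = ∫ θ in (0:ℝ)..(2 * Real.pi),
                (R / (R - ‖z₀‖)) * ‖F (cpt R θ)‖ := by
              refine abs_of_nonneg (intervalIntegral.integral_nonneg (by positivity) ?_)
              intro θ _
              positivity
          _ = (R / (R - ‖z₀‖)) *
                ∫ θ in (0:ℝ)..(2 * Real.pi), ‖F (cpt R θ)‖ := by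
              rw [intervalIntegral.integral_const_mul]

set_option maxHeartbeats 1000000 in
lemma tendsto_circle_integral {F : ℂ → ℂ} (hFc : ContinuousOn F (ball 0 1)) {M : ℝ}
    (hM : ∀ z ∈ ball (0:ℂ) 1, ‖F z‖ ≤ M)
    (hinner : ∀ᵐ (θ : ℝ) ∂(volume.restrict (Set.Icc (0 : ℝ) (2 * Real.pi))),
      ∃ L : ℂ, Filter.Tendsto (fun ρ : ℝ => F ((ρ : ℂ) * Complex.exp ((θ : ℂ) * Complex.I)))
          (nhdsWithin 1 (Set.Iio 1)) (nhds L) ∧ ‖L‖ = 1)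
    {r : ℕ → ℝ} (hr01 : ∀ n, r n ∈ Set.Ioo (0:ℝ) 1)
    (hrt : Tendsto r atTop (nhdsWithin 1 (Set.Iio 1))) :
    Tendsto (fun n => ∫ θ in (0:ℝ)..(2 * Real.pi), Complex.normSq (F (cpt (r n) θ)))
      atTop (nhds (2 * Real.pi)) := by
  have h2π : (0:ℝ) ≤ 2 * Real.pi := by positivity
  have hconst : (∫ _ in (0:ℝ)..(2 * Real.pi), (1:ℝ)) = 2 * Real.pi := by simp
  suffices main : Tendsto
      (fun n => ∫ θ in (0:ℝ)..(2 * Real.pi), Complex.normSq (F (cpt (r n) θ)))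
      atTop (nhds (∫ _ in (0:ℝ)..(2 * Real.pi), (1:ℝ))) by
    rwa [hconst] at main
  apply intervalIntegral.tendsto_integral_filter_of_dominated_convergence (bound := fun _ => M ^ 2)
  · apply Filter.Eventually.of_forall
    intro n
    have hrn : |r n| < 1 := by
      rw [abs_of_pos (hr01 n).1]; exact (hr01 n).2
    exact (Complex.continuous_normSq.comp (cont_circle hFc hrn)).aestronglyMeasurable
  · apply Filter.Eventually.of_forall
    intro n
    apply ae_of_all
    intro θ _
    have hrn : |r n| < 1 := by rw [abs_of_pos (hr01 n).1]; exact (hr01 n).2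
    have hmem := cpt_mem hrn θ
    have h1 : Complex.normSq (F (cpt (r n) θ)) = ‖F (cpt (r n) θ)‖ ^ 2 :=
      Complex.normSq_eq_norm_sq _
    rw [Real.norm_eq_abs, _root_.abs_of_nonneg (Complex.normSq_nonneg _), h1]
    have := hM _ hmem
    have h0 : (0:ℝ) ≤ ‖F (cpt (r n) θ)‖ := norm_nonneg _
    nlinarith
  · exact intervalIntegrable_const
  · rw [ae_restrict_iff' measurableSet_Icc] at hinner
    filter_upwards [hinner] with θ hθ hmem
    have hIcc : θ ∈ Set.Icc (0:ℝ) (2 * Real.pi) := by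
      rw [Set.uIoc_of_le h2π] at hmem
      exact Set.Ioc_subset_Icc_self hmem
    obtain ⟨L, hL, habs⟩ := hθ hIcc
    have h1 : Tendsto (fun n => F (cpt (r n) θ)) atTop (nhds L) := by
      have := hL.comp hrt
      exact this
    have h2 : Tendsto (fun n => Complex.normSq (F (cpt (r n) θ))) atTop
        (nhds (Complex.normSq L)) := (Complex.continuous_normSq.tendsto L).comp h1
    have h3 : Complex.normSq L = 1 := by
      rw [Complex.normSq_eq_norm_sq, habs, one_pow]
    rwa [h3] at h2

theorem wiener_inner_implies_eq (k : ℕ) (hk : 2 ≤ k) (f : ℂ → ℂ)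
    (hf : DifferentiableOn ℂ f (Metric.ball 0 1))
    (hb : ∃ M : ℝ, ∀ z ∈ Metric.ball (0 : ℂ) 1, ‖f z‖ ≤ M)
    (hinner : ∀ᵐ (θ : ℝ) ∂(volume.restrict (Set.Icc (0 : ℝ) (2 * Real.pi))),
      ∃ L : ℂ, Filter.Tendsto (fun r : ℝ => f ((r : ℂ) * Complex.exp ((θ : ℂ) * Complex.I)))
          (nhdsWithin 1 (Set.Iio 1)) (nhds L) ∧ ‖L‖ = 1)
    (hinnerW : ∀ᵐ (θ : ℝ) ∂(volume.restrict (Set.Icc (0 : ℝ) (2 * Real.pi))),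
      ∃ L : ℂ, Filter.Tendsto
          (fun r : ℝ => wiener k f ((r : ℂ) * Complex.exp ((θ : ℂ) * Complex.I)))
          (nhdsWithin 1 (Set.Iio 1)) (nhds L) ∧ ‖L‖ = 1) :
    ∀ z ∈ Metric.ball (0 : ℂ) 1, f z = wiener k f z := by
  obtain ⟨M, hM⟩ := hb
  have hk0 : k ≠ 0 := by omega
  set g := wiener k f with hgdef
  have hgd : DifferentiableOn ℂ g (ball 0 1) := wiener_diffOn k hf
  have hgc : ContinuousOn g (ball 0 1) := hgd.continuousOn
  have hfc : ContinuousOn f (ball 0 1) := hf.continuousOn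
  have hgM : ∀ z ∈ ball (0:ℂ) 1, ‖g z‖ ≤ M := wiener_bound k hk0 hM
  -- the radii
  set r : ℕ → ℝ := fun n => 1 - 1 / (n + 2) with hrdef
  have hr01 : ∀ n, r n ∈ Set.Ioo (0:ℝ) 1 := by
    intro n
    have hn0 : (0:ℝ) ≤ (n:ℝ) := Nat.cast_nonneg n
    have h2 : (2:ℝ) ≤ (n:ℝ) + 2 := by linarith
    have hp : (0:ℝ) < (n:ℝ) + 2 := by linarith
    have hle : 1 / ((n:ℝ) + 2) ≤ 1 / 2 := one_div_le_one_div_of_le (by norm_num) h2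
    have hpos : 0 < 1 / ((n:ℝ) + 2) := by positivity
    exact ⟨by simp only [hrdef]; linarith, by simp only [hrdef]; linarith⟩
  have hrmono : Monotone r := by
    intro n m hnm
    have h2 : ((n:ℝ) + 2) ≤ ((m:ℝ) + 2) := by
      have := (Nat.cast_le (α := ℝ)).mpr hnm; linarith
    have := one_div_le_one_div_of_le (by positivity : (0:ℝ) < (n:ℝ) + 2) h2
    simp only [hrdef]; linarith
  have hrn1 : Tendsto r atTop (nhds 1) := by
    have h1 : Tendsto (fun n : ℕ => ((n:ℝ) + 2)) atTop atTop :=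
      tendsto_atTop_add_const_right _ 2 tendsto_natCast_atTop_atTop
    have h2 : Tendsto (fun n : ℕ => 1 / ((n:ℝ) + 2)) atTop (nhds 0) := by
      simpa [one_div, Pi.inv_def] using h1.inv_tendsto_atTop
    have h3 : Tendsto (fun _ : ℕ => (1:ℝ)) atTop (nhds 1) := tendsto_const_nhds
    have h4 := h3.sub h2
    simp only [sub_zero] at h4
    simpa [hrdef, one_div] using h4
  have hrt : Tendsto r atTop (nhdsWithin 1 (Set.Iio 1)) :=
    tendsto_nhdsWithin_of_tendsto_nhds_of_eventually_within _ hrn1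
      (Filter.Eventually.of_forall fun n => (hr01 n).2)
  -- the three integral sequences
  have habs : ∀ n, |r n| < 1 := fun n => by
    rw [abs_of_pos (hr01 n).1]; exact (hr01 n).2
  set D : ℕ → ℝ := fun n =>
    ∫ θ in (0:ℝ)..(2 * Real.pi), Complex.normSq (f (cpt (r n) θ) - g (cpt (r n) θ)) with hDdef
  have hA : Tendsto (fun n => ∫ θ in (0:ℝ)..(2 * Real.pi), Complex.normSq (f (cpt (r n) θ)))
      atTop (nhds (2 * Real.pi)) := tendsto_circle_integral hfc hM hinner hr01 hrt
  have hB : Tendsto (fun n => ∫ θ in (0:ℝ)..(2 * Real.pi), Complex.normSq (g (cpt (r n) θ)))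
      atTop (nhds (2 * Real.pi)) := tendsto_circle_integral hgc hgM hinnerW hr01 hrt
  have hD : Tendsto D atTop (nhds 0) := by
    have heq : D = fun n =>
        (∫ θ in (0:ℝ)..(2 * Real.pi), Complex.normSq (f (cpt (r n) θ)))
          - ∫ θ in (0:ℝ)..(2 * Real.pi), Complex.normSq (g (cpt (r n) θ)) := by
      funext n
      exact key_identity k hk0 f hfc hgc (habs n)
    rw [heq]
    simpa using hA.sub hB
  -- conclusion at a point
  intro z₀ hz₀
  have hhd : DifferentiableOn ℂ (fun z => f z - g z) (ball 0 1) := hf.sub hgd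
  set a := ‖z₀‖ with hadef
  have ha0 : 0 ≤ a := norm_nonneg _
  have ha1 : a < 1 := by rw [hadef, ← mem_ball_zero_iff]; exact hz₀
  obtain ⟨N, hN⟩ : ∃ N, a < r N := ((hrn1.eventually (eventually_gt_nhds ha1)).exists)
  set C : ℝ := r N / (r N - a) with hCdef
  have hCpos : 0 < C := by
    apply div_pos (hr01 N).1; linarith
  have key : ∀ ε : ℝ, 0 < ε →
      ‖f z₀ - g z₀‖ ≤ (2 * Real.pi)⁻¹ * (C * (Real.pi * ε)) := by
    intro ε hε
    have hlim : Tendsto (fun n => (2 * Real.pi)⁻¹ * (C * (Real.pi * ε + 1 / (2 * ε) * D n)))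
        atTop (nhds ((2 * Real.pi)⁻¹ * (C * (Real.pi * ε)))) := by
      have h1 : Tendsto (fun n => Real.pi * ε + 1 / (2 * ε) * D n) atTop
          (nhds (Real.pi * ε + 1 / (2 * ε) * 0)) :=
        tendsto_const_nhds.add (hD.const_mul _)
      have h2 := (h1.const_mul C).const_mul ((2 * Real.pi)⁻¹)
      simpa using h2
    refine ge_of_tendsto hlim ?_
    filter_upwards [Filter.eventually_ge_atTop N] with n hn
    have hrNn : r N ≤ r n := hrmono hn
    have han : a < r n := lt_of_lt_of_le hN hrNn
    have h1 := cauchy_bound hhd (hr01 n).1 (hr01 n).2 (show ‖z₀‖ < r n from han)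
    have hpoint : ∀ θ : ℝ, ‖(fun z => f z - g z) (cpt (r n) θ)‖
        ≤ ε / 2 + 1 / (2 * ε) * Complex.normSq (f (cpt (r n) θ) - g (cpt (r n) θ)) := by
      intro θ
      set w := ‖f (cpt (r n) θ) - g (cpt (r n) θ)‖ with hw
      have hw0 : 0 ≤ w := norm_nonneg _
      have hns : Complex.normSq (f (cpt (r n) θ) - g (cpt (r n) θ)) = w ^ 2 :=
        Complex.normSq_eq_norm_sq _
      simp only [hns]
      show w ≤ ε / 2 + 1 / (2 * ε) * w ^ 2
      rw [← sub_nonneg]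
      have heq2 : ε / 2 + 1 / (2 * ε) * w ^ 2 - w = (w - ε) ^ 2 / (2 * ε) := by
        field_simp
        ring
      rw [heq2]
      positivity
    have hcont1 : Continuous fun θ => ‖f (cpt (r n) θ) - g (cpt (r n) θ)‖ :=
      continuous_norm.comp ((cont_circle hfc (habs n)).sub (cont_circle hgc (habs n)))
    have hcont2 : Continuous fun θ =>
        ε / 2 + 1 / (2 * ε) * Complex.normSq (f (cpt (r n) θ) - g (cpt (r n) θ)) := by
      apply continuous_const.add
      exact continuous_const.mul (Complex.continuous_normSq.comp
        ((cont_circle hfc (habs n)).sub (cont_circle hgc (habs n))))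
    have h2 : (∫ θ in (0:ℝ)..(2 * Real.pi),
        ‖(fun z => f z - g z) (cpt (r n) θ)‖)
        ≤ Real.pi * ε + 1 / (2 * ε) * D n := by
      calc (∫ θ in (0:ℝ)..(2 * Real.pi), ‖(fun z => f z - g z) (cpt (r n) θ)‖)
          ≤ ∫ θ in (0:ℝ)..(2 * Real.pi),
              (ε / 2 + 1 / (2 * ε) * Complex.normSq (f (cpt (r n) θ) - g (cpt (r n) θ))) := by
            apply intervalIntegral.integral_mono_on (by positivity)
              (hcont1.intervalIntegrable _ _) (hcont2.intervalIntegrable _ _)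
            intro θ _
            exact hpoint θ
        _ = Real.pi * ε + 1 / (2 * ε) * D n := by
            have hcont3 : Continuous fun θ : ℝ =>
                1 / (2 * ε) * Complex.normSq (f (cpt (r n) θ) - g (cpt (r n) θ)) :=
              continuous_const.mul (Complex.continuous_normSq.comp
                ((cont_circle hfc (habs n)).sub (cont_circle hgc (habs n))))
            rw [intervalIntegral.integral_add intervalIntegrable_const
              (hcont3.intervalIntegrable _ _),
              intervalIntegral.integral_const_mul, intervalIntegral.integral_const]
            simp only [hDdef, smul_eq_mul]
            ring
    have h3 : r n / (r n - a) ≤ C := by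
      rw [hCdef, div_le_div_iff₀ (by linarith) (by linarith)]
      nlinarith
    calc ‖f z₀ - g z₀‖
        = ‖(fun z => f z - g z) z₀‖ := rfl
      _ ≤ (2 * Real.pi)⁻¹ * ((r n / (r n - ‖z₀‖)) *
          ∫ θ in (0:ℝ)..(2 * Real.pi), ‖(fun z => f z - g z) (cpt (r n) θ)‖) := h1
      _ ≤ (2 * Real.pi)⁻¹ * (C * (Real.pi * ε + 1 / (2 * ε) * D n)) := by
          have hint0 : 0 ≤ ∫ θ in (0:ℝ)..(2 * Real.pi),
              ‖(fun z => f z - g z) (cpt (r n) θ)‖ := by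
            apply intervalIntegral.integral_nonneg (by positivity)
            intro θ _
            exact norm_nonneg _
          gcongr
  -- finish
  have hfinal : ‖f z₀ - g z₀‖ ≤ 0 := by
    apply le_of_forall_pos_le_add
    intro ε' hε'
    have hεp : 0 < 2 * ε' / C := by positivity
    have := key (2 * ε' / C) hεp
    have heq : (2 * Real.pi)⁻¹ * (C * (Real.pi * (2 * ε' / C))) = ε' := by
      field_simp
    rw [heq] at this
    linarith
  have := le_antisymm hfinal (norm_nonneg _)
  have := norm_eq_zero.mp this
  have := sub_eq_zero.mp this
  exact this
end

section
/- Fix 1 ≤ p < ∞. The function t ↦ Φ₁(p,t) is decreasing on [0,1], with Φ₁(p,0) = 1 and Φ₁(p,1) = 0; in particular it takes all values in [0,1]. -/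
open MeasureTheory
open scoped ENNReal

section Aux
open Metric Set Filter Complex intervalIntegral

/-- probability measure on the parameter circle -/
noncomputable def circMeasure : Measure ℝ :=
  (ENNReal.ofReal (2 * Real.pi))⁻¹ • (volume.restrict (Set.Ioc (0:ℝ) (2*Real.pi)))

lemma circMeasure_prob : IsProbabilityMeasure circMeasure := by
  constructor
  rw [circMeasure]
  simp only [Measure.smul_apply, Measure.restrict_apply MeasurableSet.univ, Set.univ_inter,
    Real.volume_Ioc, smul_eq_mul]
  rw [sub_zero, ENNReal.inv_mul_cancel]
  · exact (ENNReal.ofReal_pos.2 Real.two_pi_pos).ne'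
  · exact ENNReal.ofReal_ne_top

lemma hpInt_eq_lintegral_circ (p : ℝ) (hp : 0 ≤ p) (f : ℂ → ℂ) (r : ℝ) :
    hpInt p f r = ∫⁻ θ, ((‖f (circleMap 0 r θ)‖₊ : ℝ≥0∞) ^ p) ∂circMeasure := by
  rw [circMeasure, lintegral_smul_measure, hpInt, ENNReal.div_eq_inv_mul]
  congr 1
  refine lintegral_congr fun θ => ?_
  rw [circleMap_zero]
  rw [← ENNReal.ofReal_rpow_of_nonneg (norm_nonneg _) hp,
    ofReal_norm]
  rfl

lemma hpInt_rpow_eq (p : ℝ) (hp : 1 ≤ p) (f : ℂ → ℂ) (r : ℝ) :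
    hpInt p f r ^ (1/p) =
      eLpNorm (fun θ => f (circleMap 0 r θ)) (ENNReal.ofReal p) circMeasure := by
  have hp0 : (0:ℝ) < p := lt_of_lt_of_le zero_lt_one hp
  rw [eLpNorm_eq_lintegral_rpow_enorm_toReal (by simpa using hp0) ENNReal.ofReal_ne_top,
    ENNReal.toReal_ofReal hp0.le, hpInt_eq_lintegral_circ p hp0.le]
  rfl

end Aux

variable {p r t B : ℝ} {f : ℂ → ℂ}

lemma cont_circle_s9 (hf : DifferentiableOn ℂ f (Metric.ball 0 1)) (hr : r ∈ Set.Ioo (0:ℝ) 1) :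
    Continuous fun θ => f (circleMap 0 r θ) := by
  apply hf.continuousOn.comp_continuous (continuous_circleMap 0 r)
  intro θ
  have hn : ‖circleMap 0 r θ‖ = |r| := by rw [norm_circleMap_zero]
  rw [mem_ball_zero_iff, hn, abs_of_pos hr.1]
  exact hr.2

lemma eLpNorm_le_one (hp : 1 ≤ p) (hnorm : hpNorm p f ≤ 1) (hr : r ∈ Set.Ioo (0:ℝ) 1) :
    eLpNorm (fun θ => f (circleMap 0 r θ)) (ENNReal.ofReal p) circMeasure ≤ 1 := by
  rw [← hpInt_rpow_eq p hp]
  exact le_trans (le_biSup (fun r => hpInt p f r ^ (1/p)) hr) hnorm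

lemma norm_circle_integral_le (hp : 1 ≤ p) (hf : DifferentiableOn ℂ f (Metric.ball 0 1))
    (hnorm : hpNorm p f ≤ 1) (hr : r ∈ Set.Ioo (0:ℝ) 1) :
    ∫ θ in (0:ℝ)..(2*Real.pi), ‖f (circleMap 0 r θ)‖ ≤ 2*Real.pi := by
  haveI := circMeasure_prob
  have hFc : Continuous fun θ => f (circleMap 0 r θ) := cont_circle_s9 hf hr
  have h1 : eLpNorm (fun θ => f (circleMap 0 r θ)) 1 circMeasure ≤ 1 :=
    le_trans (eLpNorm_le_eLpNorm_of_exponent_le (by simpa using hp) hFc.aestronglyMeasurable)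
      (eLpNorm_le_one hp hnorm hr)
  rw [eLpNorm_one_eq_lintegral_enorm, circMeasure, lintegral_smul_measure] at h1
  have h2π : ENNReal.ofReal (2*Real.pi) ≠ 0 := (ENNReal.ofReal_pos.2 Real.two_pi_pos).ne'
  have h2 : (∫⁻ θ in Set.Ioc (0:ℝ) (2*Real.pi), (‖f (circleMap 0 r θ)‖₊ : ENNReal))
      ≤ ENNReal.ofReal (2*Real.pi) := by
    calc (∫⁻ θ in Set.Ioc (0:ℝ) (2*Real.pi), (‖f (circleMap 0 r θ)‖₊ : ENNReal))
        = ENNReal.ofReal (2*Real.pi) * ((ENNReal.ofReal (2*Real.pi))⁻¹ *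
            ∫⁻ θ in Set.Ioc (0:ℝ) (2*Real.pi), (‖f (circleMap 0 r θ)‖₊ : ENNReal)) := by
          rw [← mul_assoc, ENNReal.mul_inv_cancel h2π ENNReal.ofReal_ne_top, one_mul]
      _ ≤ ENNReal.ofReal (2*Real.pi) * 1 := mul_le_mul_right h1 _
      _ = ENNReal.ofReal (2*Real.pi) := mul_one _
  rw [intervalIntegral.integral_of_le Real.two_pi_pos.le,
    MeasureTheory.integral_eq_lintegral_of_nonneg_ae (Filter.Eventually.of_forall
      fun θ => norm_nonneg _) hFc.norm.aestronglyMeasurable]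
  apply ENNReal.toReal_le_of_le_ofReal Real.two_pi_pos.le
  simp only [ofReal_norm]; exact h2

section Identities
open Complex Metric intervalIntegral

variable {p r t B : ℝ} {f : ℂ → ℂ}

lemma hc_aux (hf : DifferentiableOn ℂ f (Metric.ball 0 1)) (hr : r ∈ Set.Ioo (0:ℝ) 1) :
    ContinuousOn f (closedBall 0 r) :=
  hf.continuousOn.mono (closedBall_subset_ball hr.2)

lemma hd_aux (hf : DifferentiableOn ℂ f (Metric.ball 0 1)) (hr : r ∈ Set.Ioo (0:ℝ) 1) :
    ∀ z ∈ ball (0:ℂ) r \ (∅ : Set ℂ), DifferentiableAt ℂ f z := fun z hz =>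
  hf.differentiableAt (isOpen_ball.mem_nhds (ball_subset_ball hr.2.le hz.1))

lemma integral_circle_eq_center (hf : DifferentiableOn ℂ f (Metric.ball 0 1))
    (hr : r ∈ Set.Ioo (0:ℝ) 1) :
    ∫ θ in (0:ℝ)..(2*Real.pi), f (circleMap 0 r θ) = ((2*Real.pi : ℝ) : ℂ) * f 0 := by
  have h := Complex.circleIntegral_sub_center_inv_smul_of_differentiable_on_off_countable
    hr.1 Set.countable_empty (hc_aux hf hr) (hd_aux hf hr)
  rw [circleIntegral] at h
  rw [intervalIntegral.integral_congr
    (g := fun θ : ℝ => I * f (circleMap 0 r θ)) ?_] at h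
  · rw [intervalIntegral.integral_const_mul] at h
    apply mul_left_cancel₀ I_ne_zero
    rw [h, smul_eq_mul]; push_cast; ring
  · intro θ _
    have h0 : circleMap 0 r θ ≠ 0 := circleMap_ne_center hr.1.ne'
    simp only [deriv_circleMap, smul_eq_mul, sub_zero]
    field_simp

lemma integral_circle_mul_eq_zero (hf : DifferentiableOn ℂ f (Metric.ball 0 1))
    (hr : r ∈ Set.Ioo (0:ℝ) 1) :
    ∫ θ in (0:ℝ)..(2*Real.pi), circleMap 0 r θ * f (circleMap 0 r θ) = 0 := by
  have h := Complex.circleIntegral_eq_zero_of_differentiable_on_off_countable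
    hr.1.le Set.countable_empty (hc_aux hf hr) (hd_aux hf hr)
  rw [circleIntegral] at h
  rw [intervalIntegral.integral_congr
    (g := fun θ : ℝ => I * (circleMap 0 r θ * f (circleMap 0 r θ))) ?_] at h
  · rw [intervalIntegral.integral_const_mul] at h
    exact (mul_eq_zero.1 h).resolve_left I_ne_zero
  · intro θ _
    simp only [deriv_circleMap, smul_eq_mul]
    ring

lemma integral_circle_inv_eq_deriv (hf : DifferentiableOn ℂ f (Metric.ball 0 1))
    (hr : r ∈ Set.Ioo (0:ℝ) 1) :
    ∫ θ in (0:ℝ)..(2*Real.pi), (circleMap 0 r θ)⁻¹ * f (circleMap 0 r θ)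
      = ((2*Real.pi : ℝ) : ℂ) * deriv f 0 := by
  set r' : NNReal := ⟨r, hr.1.le⟩ with hr'
  have hrc : (r' : ℝ) = r := rfl
  have hd2 : DifferentiableOn ℂ f (closedBall 0 (r' : ℝ)) := by
    rw [hrc]; exact hf.mono (closedBall_subset_ball hr.2)
  have hps := hd2.hasFPowerSeriesOnBall (by exact_mod_cast hr.1)
  have hder : deriv f 0 = (cauchyPowerSeries f 0 (r' : ℝ)).coeff 1 :=
    hps.hasFPowerSeriesAt.deriv
  have happ := cauchyPowerSeries_apply f 0 (r' : ℝ) 1 1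
  rw [FormalMultilinearSeries.apply_eq_pow_smul_coeff, pow_one, one_smul] at happ
  rw [circleIntegral] at happ
  rw [intervalIntegral.integral_congr
    (g := fun θ : ℝ => I * ((circleMap 0 r θ)⁻¹ * f (circleMap 0 r θ))) ?_] at happ
  · rw [intervalIntegral.integral_const_mul, smul_eq_mul] at happ
    rw [hder, happ]
    push_cast
    field_simp [Complex.I_ne_zero, Complex.ofReal_ne_zero.2 Real.pi_ne_zero]
  · intro θ _
    have h0 : circleMap 0 (r' : ℝ) θ ≠ 0 := circleMap_ne_center (by rw [hrc]; exact hr.1.ne')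
    simp only [deriv_circleMap, smul_eq_mul, sub_zero, hrc] at h0 ⊢
    rw [pow_one]
    field_simp

end Identities

section Master
open Complex Metric intervalIntegral Set

variable {p r t B : ℝ} {f : ℂ → ℂ}

lemma kernel_re_bound (hp : 1 ≤ p) (hf : DifferentiableOn ℂ f (Metric.ball 0 1))
    (hnorm : hpNorm p f ≤ 1) (hr : r ∈ Set.Ioo (0:ℝ) 1) {g : ℝ → ℂ} {M : ℝ}
    (hgc : Continuous g) (hg : ∀ θ, ‖g θ‖ ≤ M) :
    (∫ θ in (0:ℝ)..(2*Real.pi), g θ * f (circleMap 0 r θ)).re ≤ M * (2*Real.pi) := by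
  have hFc := cont_circle_s9 hf hr
  have hM : 0 ≤ M := le_trans (norm_nonneg _) (hg 0)
  calc (∫ θ in (0:ℝ)..(2*Real.pi), g θ * f (circleMap 0 r θ)).re
      ≤ ‖∫ θ in (0:ℝ)..(2*Real.pi), g θ * f (circleMap 0 r θ)‖ := Complex.re_le_norm _
    _ ≤ ∫ θ in (0:ℝ)..(2*Real.pi), ‖g θ * f (circleMap 0 r θ)‖ :=
        intervalIntegral.norm_integral_le_integral_norm Real.two_pi_pos.le
    _ ≤ ∫ θ in (0:ℝ)..(2*Real.pi), M * ‖f (circleMap 0 r θ)‖ := by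
        apply intervalIntegral.integral_mono_on Real.two_pi_pos.le
        · exact ((hgc.mul hFc).norm).intervalIntegrable _ _
        · exact (continuous_const.mul hFc.norm).intervalIntegrable _ _
        · intro θ _
          rw [norm_mul]
          exact mul_le_mul_of_nonneg_right (hg θ) (norm_nonneg _)
    _ = M * ∫ θ in (0:ℝ)..(2*Real.pi), ‖f (circleMap 0 r θ)‖ :=
        intervalIntegral.integral_const_mul _ _
    _ ≤ M * (2*Real.pi) :=
        mul_le_mul_of_nonneg_left (norm_circle_integral_le hp hf hnorm hr) hM

lemma le_of_r_mul_le {x C : ℝ} (hC : 0 ≤ C) (h : ∀ r ∈ Set.Ioo (0:ℝ) 1, r * x ≤ C) : x ≤ C := by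
  by_contra hcon
  push_neg at hcon
  have hx0 : 0 < x := lt_of_le_of_lt hC hcon
  have hr : (C/x + 1)/2 ∈ Set.Ioo (0:ℝ) 1 := by
    constructor
    · positivity
    · have : C/x < 1 := (div_lt_one hx0).2 hcon
      linarith
  have h2 := h _ hr
  have hCx : C/x * x = C := div_mul_cancel₀ C hx0.ne'
  nlinarith

lemma re_deriv_le_one (hp : 1 ≤ p) (hf : DifferentiableOn ℂ f (Metric.ball 0 1))
    (hnorm : hpNorm p f ≤ 1) : (deriv f 0).re ≤ 1 := by
  apply le_of_r_mul_le zero_le_one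
  intro r hr
  have h0 : ∀ θ : ℝ, circleMap 0 r θ ≠ 0 := fun θ => circleMap_ne_center hr.1.ne'
  have hcm : ∀ θ : ℝ, ‖circleMap 0 r θ‖ = r := fun θ => by
    rw [norm_circleMap_zero, abs_of_pos hr.1]
  have key := kernel_re_bound hp hf hnorm hr
    (g := fun θ => (r:ℂ) * (circleMap 0 r θ)⁻¹) (M := 1)
    (continuous_const.mul ((continuous_circleMap 0 r).inv₀ h0))
    (fun θ => by
      rw [norm_mul, norm_inv, hcm θ, Complex.norm_real, Real.norm_eq_abs, abs_of_pos hr.1,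
        mul_inv_cancel₀ hr.1.ne'])
  have heq : ∫ θ in (0:ℝ)..(2*Real.pi), (r:ℂ) * (circleMap 0 r θ)⁻¹ * f (circleMap 0 r θ)
      = ((2*Real.pi:ℝ):ℂ) * ((r:ℂ) * deriv f 0) := by
    have h1 := integral_circle_inv_eq_deriv hf hr
    calc ∫ θ in (0:ℝ)..(2*Real.pi), (r:ℂ) * (circleMap 0 r θ)⁻¹ * f (circleMap 0 r θ)
        = ∫ θ in (0:ℝ)..(2*Real.pi), (r:ℂ) * ((circleMap 0 r θ)⁻¹ * f (circleMap 0 r θ)) := by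
          apply intervalIntegral.integral_congr; intro θ _; ring
      _ = (r:ℂ) * ∫ θ in (0:ℝ)..(2*Real.pi), (circleMap 0 r θ)⁻¹ * f (circleMap 0 r θ) :=
          intervalIntegral.integral_const_mul _ _
      _ = ((2*Real.pi:ℝ):ℂ) * ((r:ℂ) * deriv f 0) := by rw [h1]; ring
  rw [heq] at key
  have hre : (((2*Real.pi:ℝ):ℂ) * ((r:ℂ) * deriv f 0)).re
      = 2*Real.pi * (r * (deriv f 0).re) := by
    rw [Complex.re_ofReal_mul, Complex.re_ofReal_mul]
  rw [hre, one_mul] at key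
  nlinarith [Real.two_pi_pos]

lemma master_integral (hf : DifferentiableOn ℂ f (Metric.ball 0 1))
    (hr : r ∈ Set.Ioo (0:ℝ) 1) (B : ℝ) :
    ∫ θ in (0:ℝ)..(2*Real.pi),
        ((r:ℂ) * (circleMap 0 r θ)⁻¹ - (r:ℂ)⁻¹ * circleMap 0 r θ - (B:ℂ)) * f (circleMap 0 r θ)
      = ((2*Real.pi:ℝ):ℂ) * ((r:ℂ) * deriv f 0 - (B:ℂ) * f 0) := by
  have hFc := cont_circle_s9 hf hr
  have h0 : ∀ θ : ℝ, circleMap 0 r θ ≠ 0 := fun θ => circleMap_ne_center hr.1.ne'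
  have hinv : Continuous fun θ => (circleMap 0 r θ)⁻¹ := (continuous_circleMap 0 r).inv₀ h0
  have i1 : IntervalIntegrable
      (fun θ => (r:ℂ) * ((circleMap 0 r θ)⁻¹ * f (circleMap 0 r θ)))
      MeasureTheory.volume 0 (2*Real.pi) :=
    (continuous_const.mul (hinv.mul hFc)).intervalIntegrable _ _
  have i2 : IntervalIntegrable
      (fun θ => (r:ℂ)⁻¹ * (circleMap 0 r θ * f (circleMap 0 r θ)))
      MeasureTheory.volume 0 (2*Real.pi) :=
    (continuous_const.mul ((continuous_circleMap 0 r).mul hFc)).intervalIntegrable _ _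
  have i3 : IntervalIntegrable (fun θ => (B:ℂ) * f (circleMap 0 r θ))
      MeasureTheory.volume 0 (2*Real.pi) :=
    (continuous_const.mul hFc).intervalIntegrable _ _
  have hfun : (fun θ => ((r:ℂ) * (circleMap 0 r θ)⁻¹ - (r:ℂ)⁻¹ * circleMap 0 r θ - (B:ℂ))
        * f (circleMap 0 r θ))
      = fun θ => (r:ℂ) * ((circleMap 0 r θ)⁻¹ * f (circleMap 0 r θ))
        - (r:ℂ)⁻¹ * (circleMap 0 r θ * f (circleMap 0 r θ)) - (B:ℂ) * f (circleMap 0 r θ) := by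
    funext θ; ring
  rw [hfun, intervalIntegral.integral_sub (i1.sub i2) i3, intervalIntegral.integral_sub i1 i2,
    intervalIntegral.integral_const_mul, intervalIntegral.integral_const_mul,
    intervalIntegral.integral_const_mul, integral_circle_inv_eq_deriv hf hr,
    integral_circle_mul_eq_zero hf hr, integral_circle_eq_center hf hr]
  ring

lemma gnorm_le (hr : r ∈ Set.Ioo (0:ℝ) 1) (B θ : ℝ) :
    ‖(r:ℂ) * (circleMap 0 r θ)⁻¹ - (r:ℂ)⁻¹ * circleMap 0 r θ - (B:ℂ)‖
      ≤ Real.sqrt (B^2+4) := by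
  have hr0 : (r:ℂ) ≠ 0 := Complex.ofReal_ne_zero.2 hr.1.ne'
  have hexp : Complex.exp ((θ:ℂ) * Complex.I) ≠ 0 := Complex.exp_ne_zero _
  have hg : (r:ℂ) * (circleMap 0 r θ)⁻¹ - (r:ℂ)⁻¹ * circleMap 0 r θ - (B:ℂ)
      = Complex.exp (((-θ:ℝ):ℂ) * Complex.I) - Complex.exp (((θ:ℝ):ℂ) * Complex.I) - (B:ℂ) := by
    rw [circleMap_zero, mul_inv]
    have : Complex.exp (((-θ:ℝ):ℂ) * Complex.I) = (Complex.exp ((θ:ℂ) * Complex.I))⁻¹ := by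
      rw [← Complex.exp_neg]; push_cast; ring_nf
    rw [this]
    field_simp
  rw [hg]
  have hre : (Complex.exp (((-θ:ℝ):ℂ) * Complex.I) - Complex.exp (((θ:ℝ):ℂ) * Complex.I)
      - (B:ℂ)).re = -B := by
    rw [Complex.sub_re, Complex.sub_re, Complex.exp_ofReal_mul_I_re, Complex.exp_ofReal_mul_I_re,
      Real.cos_neg, Complex.ofReal_re]
    ring
  have him : (Complex.exp (((-θ:ℝ):ℂ) * Complex.I) - Complex.exp (((θ:ℝ):ℂ) * Complex.I)
      - (B:ℂ)).im = -2 * Real.sin θ := by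
    rw [Complex.sub_im, Complex.sub_im, Complex.exp_ofReal_mul_I_im, Complex.exp_ofReal_mul_I_im,
      Real.sin_neg, Complex.ofReal_im]
    ring
  rw [Complex.norm_def, Complex.normSq_apply, hre, him]
  apply Real.sqrt_le_sqrt
  nlinarith [Real.sin_sq_le_one θ]

lemma master_bound (hp : 1 ≤ p) (hf : DifferentiableOn ℂ f (Metric.ball 0 1))
    (hnorm : hpNorm p f ≤ 1) (hf0 : f 0 = (t:ℂ)) (ht : t ∈ Set.Icc (0:ℝ) 1) (B : ℝ) :
    (deriv f 0).re ≤ Real.sqrt (B^2+4) + B * t := by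
  have habs : |B| ≤ Real.sqrt (B^2+4) := by
    rw [← Real.sqrt_sq_eq_abs]
    exact Real.sqrt_le_sqrt (by nlinarith)
  have hC : 0 ≤ Real.sqrt (B^2+4) + B * t := by
    rcases le_or_gt 0 B with hB | hB
    · have : 0 ≤ B * t := mul_nonneg hB ht.1
      linarith [Real.sqrt_nonneg (B^2+4)]
    · have h1 : B ≤ B * t := by nlinarith [ht.2]
      have h2 : -B ≤ |B| := neg_le_abs B
      linarith
  apply le_of_r_mul_le hC
  intro r hr
  have h0 : ∀ θ : ℝ, circleMap 0 r θ ≠ 0 := fun θ => circleMap_ne_center hr.1.ne'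
  have hgc : Continuous fun θ : ℝ =>
      (r:ℂ) * (circleMap 0 r θ)⁻¹ - (r:ℂ)⁻¹ * circleMap 0 r θ - (B:ℂ) :=
    ((continuous_const.mul ((continuous_circleMap 0 r).inv₀ h0)).sub
      (continuous_const.mul (continuous_circleMap 0 r))).sub continuous_const
  have key := kernel_re_bound hp hf hnorm hr hgc (fun θ => gnorm_le hr B θ)
  rw [master_integral hf hr B] at key
  have hre : (((2*Real.pi:ℝ):ℂ) * ((r:ℂ) * deriv f 0 - (B:ℂ) * f 0)).re
      = 2*Real.pi * (r * (deriv f 0).re - B * t) := by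
    rw [hf0, Complex.re_ofReal_mul, Complex.sub_re, Complex.re_ofReal_mul, Complex.re_ofReal_mul,
      Complex.ofReal_re]
  rw [hre] at key
  nlinarith [Real.two_pi_pos]

end Master

section PhiLemmas
open Complex Metric Set

variable {p t r x : ℝ} {f : ℂ → ℂ}

def goodSet (p t : ℝ) : Set ℝ :=
  { x : ℝ | ∃ f : ℂ → ℂ, DifferentiableOn ℂ f (Metric.ball 0 1) ∧
    hpNorm p f ≤ 1 ∧ f 0 = (t : ℂ) ∧ x = (iteratedDeriv 1 f 0 / (Nat.factorial 1 : ℂ)).re }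

lemma Phi_eq_sSup : Phi 1 p t = sSup (goodSet p t) := rfl

lemma mem_goodSet_iff : x ∈ goodSet p t ↔ ∃ f : ℂ → ℂ,
    DifferentiableOn ℂ f (Metric.ball 0 1) ∧ hpNorm p f ≤ 1 ∧ f 0 = (t : ℂ) ∧
      x = (deriv f 0).re := by
  simp only [goodSet, Set.mem_setOf_eq, iteratedDeriv_one, Nat.factorial_one, Nat.cast_one,
    div_one]

lemma hpInt_const_abs (hp : 0 < p) {a : ℝ}
    (h : ∀ θ : ℝ, ‖f ((r:ℂ) * Complex.exp ((θ:ℂ) * Complex.I))‖ = a) :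
    hpInt p f r = ENNReal.ofReal (a ^ p) := by
  rw [hpInt]
  have hcong : ∀ θ ∈ Set.Ioc (0:ℝ) (2*Real.pi),
      ENNReal.ofReal (‖f ((r:ℂ) * Complex.exp ((θ:ℂ) * Complex.I))‖ ^ p)
        = ENNReal.ofReal (a ^ p) := fun θ _ => by rw [h θ]
  rw [MeasureTheory.setLIntegral_congr_fun measurableSet_Ioc
    (fun θ hθ => hcong θ hθ), MeasureTheory.setLIntegral_const, Real.volume_Ioc,
    sub_zero, div_eq_mul_inv, mul_assoc, ENNReal.mul_inv_cancel
      (ENNReal.ofReal_pos.2 Real.two_pi_pos).ne' ENNReal.ofReal_ne_top, mul_one]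

lemma rpow_ofReal_le_one (hp : 1 ≤ p) {a : ℝ} (ha0 : 0 ≤ a) (ha1 : a ≤ 1) :
    ENNReal.ofReal (a ^ p) ^ (1/p) ≤ 1 := by
  have hp0 : (0:ℝ) < p := lt_of_lt_of_le zero_lt_one hp
  rw [ENNReal.ofReal_rpow_of_nonneg (by positivity) (by positivity),
    ← Real.rpow_mul ha0, mul_one_div_cancel hp0.ne', Real.rpow_one]
  exact ENNReal.ofReal_le_one.2 ha1

lemma hpNorm_const_le (hp : 1 ≤ p) {c : ℝ} (hc0 : 0 ≤ c) (hc1 : c ≤ 1) :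
    hpNorm p (fun _ => (c:ℂ)) ≤ 1 := by
  apply iSup₂_le; intro r hr
  rw [hpInt_const_abs (lt_of_lt_of_le zero_lt_one hp)
    (fun θ => by rw [Complex.norm_real, Real.norm_eq_abs, _root_.abs_of_nonneg hc0])]
  exact rpow_ofReal_le_one hp hc0 hc1

lemma hpNorm_id_le (hp : 1 ≤ p) : hpNorm p (fun z => z) ≤ 1 := by
  apply iSup₂_le; intro r hr
  rw [hpInt_const_abs (a := r) (lt_of_lt_of_le zero_lt_one hp)
    (fun θ => by
      rw [norm_mul, Complex.norm_exp_ofReal_mul_I, Complex.norm_real, Real.norm_eq_abs, _root_.abs_of_pos hr.1, mul_one])]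
  exact rpow_ofReal_le_one hp hr.1.le hr.2.le

lemma zero_mem_goodSet (hp : 1 ≤ p) (ht : t ∈ Set.Icc (0:ℝ) 1) : (0:ℝ) ∈ goodSet p t := by
  rw [mem_goodSet_iff]
  exact ⟨fun _ => (t:ℂ), differentiableOn_const _, hpNorm_const_le hp ht.1 ht.2, rfl, by simp⟩

lemma one_mem_goodSet_zero (hp : 1 ≤ p) : (1:ℝ) ∈ goodSet p 0 := by
  rw [mem_goodSet_iff]
  exact ⟨fun z => z, differentiableOn_id, hpNorm_id_le hp, by simp, by simp⟩

lemma bddAbove_goodSet (hp : 1 ≤ p) : BddAbove (goodSet p t) := by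
  refine ⟨1, fun x hx => ?_⟩
  rw [mem_goodSet_iff] at hx
  obtain ⟨f, hf, hn, _, hx⟩ := hx
  rw [hx]; exact re_deriv_le_one hp hf hn

lemma Phi_le_one (hp : 1 ≤ p) : Phi 1 p t ≤ 1 := by
  rw [Phi_eq_sSup]
  refine Real.sSup_le (fun x hx => ?_) zero_le_one
  rw [mem_goodSet_iff] at hx
  obtain ⟨f, hf, hn, _, hx⟩ := hx
  rw [hx]; exact re_deriv_le_one hp hf hn

lemma Phi_nonneg (hp : 1 ≤ p) (ht : t ∈ Set.Icc (0:ℝ) 1) : 0 ≤ Phi 1 p t := by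
  rw [Phi_eq_sSup]
  exact le_csSup (bddAbove_goodSet hp) (zero_mem_goodSet hp ht)

lemma Phi_zero_eq (hp : 1 ≤ p) : Phi 1 p 0 = 1 := by
  refine le_antisymm (Phi_le_one hp) ?_
  rw [Phi_eq_sSup]
  exact le_csSup (bddAbove_goodSet hp) (one_mem_goodSet_zero hp)

lemma masterC_nonneg (ht : t ∈ Set.Icc (0:ℝ) 1) (B : ℝ) :
    0 ≤ Real.sqrt (B^2+4) + B * t := by
  have habs : |B| ≤ Real.sqrt (B^2+4) := by
    rw [← Real.sqrt_sq_eq_abs]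
    exact Real.sqrt_le_sqrt (by nlinarith)
  rcases le_or_gt 0 B with hB | hB
  · have : 0 ≤ B * t := mul_nonneg hB ht.1
    linarith [Real.sqrt_nonneg (B^2+4)]
  · have h1 : B ≤ B * t := by nlinarith [ht.2]
    have h2 : -B ≤ |B| := neg_le_abs B
    linarith

lemma Phi_le_master (hp : 1 ≤ p) (ht : t ∈ Set.Icc (0:ℝ) 1) (B : ℝ) :
    Phi 1 p t ≤ Real.sqrt (B^2+4) + B * t := by
  rw [Phi_eq_sSup]
  refine Real.sSup_le (fun x hx => ?_) (masterC_nonneg ht B)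
  rw [mem_goodSet_iff] at hx
  obtain ⟨f, hf, hn, hf0, hx⟩ := hx
  rw [hx]; exact master_bound hp hf hn hf0 ht B

lemma Phi_one_eq (hp : 1 ≤ p) : Phi 1 p 1 = 0 := by
  refine le_antisymm ?_ (Phi_nonneg hp ⟨zero_le_one, le_refl 1⟩)
  have key : ∀ ε : ℝ, 0 < ε → Phi 1 p 1 ≤ ε := by
    intro ε hε
    have hB := Phi_le_master hp ⟨zero_le_one, le_refl 1⟩ ((ε^2-4)/(2*ε))
    have h4 : ((ε^2-4)/(2*ε))^2 + 4 = ((ε^2+4)/(2*ε))^2 := by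
      field_simp; ring
    rw [h4, Real.sqrt_sq (by positivity), mul_one] at hB
    calc Phi 1 p 1 ≤ (ε^2+4)/(2*ε) + (ε^2-4)/(2*ε) := hB
      _ = ε := by field_simp; ring
  by_contra h
  push_neg at h
  have := key (Phi 1 p 1 / 2) (by linarith)
  linarith

end PhiLemmas

section Concave
open Complex Metric Set

variable {p a b t₁ t₂ x₁ x₂ : ℝ} {f f₁ f₂ : ℂ → ℂ}

lemma hpNorm_comb_le (hp : 1 ≤ p) (ha : 0 ≤ a) (hb : 0 ≤ b) (hab : a + b = 1)
    (hf₁ : DifferentiableOn ℂ f₁ (Metric.ball 0 1)) (hn₁ : hpNorm p f₁ ≤ 1)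
    (hf₂ : DifferentiableOn ℂ f₂ (Metric.ball 0 1)) (hn₂ : hpNorm p f₂ ≤ 1) :
    hpNorm p (fun z => (a:ℂ) * f₁ z + (b:ℂ) * f₂ z) ≤ 1 := by
  apply iSup₂_le; intro r hr
  rw [hpInt_rpow_eq p hp]
  have hq : (1:ℝ≥0∞) ≤ ENNReal.ofReal p := ENNReal.one_le_ofReal.2 hp
  have m₁ : AEStronglyMeasurable (fun θ => (a:ℂ) * f₁ (circleMap 0 r θ)) circMeasure :=
    (continuous_const.mul (cont_circle_s9 hf₁ hr)).aestronglyMeasurable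
  have m₂ : AEStronglyMeasurable (fun θ => (b:ℂ) * f₂ (circleMap 0 r θ)) circMeasure :=
    (continuous_const.mul (cont_circle_s9 hf₂ hr)).aestronglyMeasurable
  have heq : (fun θ => (fun z => (a:ℂ) * f₁ z + (b:ℂ) * f₂ z) (circleMap 0 r θ))
      = (fun θ => (a:ℂ) * f₁ (circleMap 0 r θ)) + (fun θ => (b:ℂ) * f₂ (circleMap 0 r θ)) := rfl
  rw [heq]
  have hs₁ : (fun θ => (a:ℂ) * f₁ (circleMap 0 r θ))
      = (a:ℂ) • (fun θ => f₁ (circleMap 0 r θ)) := rfl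
  have hs₂ : (fun θ => (b:ℂ) * f₂ (circleMap 0 r θ))
      = (b:ℂ) • (fun θ => f₂ (circleMap 0 r θ)) := rfl
  have hna : ‖(a:ℂ)‖ₑ = ENNReal.ofReal a := by
    rw [← ofReal_norm, Complex.norm_real, Real.norm_eq_abs, _root_.abs_of_nonneg ha]
  have hnb : ‖(b:ℂ)‖ₑ = ENNReal.ofReal b := by
    rw [← ofReal_norm, Complex.norm_real, Real.norm_eq_abs, _root_.abs_of_nonneg hb]
  calc eLpNorm ((fun θ => (a:ℂ) * f₁ (circleMap 0 r θ))
          + (fun θ => (b:ℂ) * f₂ (circleMap 0 r θ))) (ENNReal.ofReal p) circMeasure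
      ≤ eLpNorm (fun θ => (a:ℂ) * f₁ (circleMap 0 r θ)) (ENNReal.ofReal p) circMeasure
        + eLpNorm (fun θ => (b:ℂ) * f₂ (circleMap 0 r θ)) (ENNReal.ofReal p) circMeasure :=
        eLpNorm_add_le m₁ m₂ hq
    _ = ENNReal.ofReal a * eLpNorm (fun θ => f₁ (circleMap 0 r θ)) (ENNReal.ofReal p) circMeasure
        + ENNReal.ofReal b * eLpNorm (fun θ => f₂ (circleMap 0 r θ)) (ENNReal.ofReal p)
            circMeasure := by
        rw [hs₁, hs₂, eLpNorm_const_smul, eLpNorm_const_smul, hna, hnb]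
    _ ≤ ENNReal.ofReal a * 1 + ENNReal.ofReal b * 1 := by
        exact add_le_add (mul_le_mul_right (eLpNorm_le_one hp hn₁ hr) _)
          (mul_le_mul_right (eLpNorm_le_one hp hn₂ hr) _)
    _ = 1 := by
        rw [mul_one, mul_one, ← ENNReal.ofReal_add ha hb, hab, ENNReal.ofReal_one]

lemma comb_mem (hp : 1 ≤ p) (ha : 0 < a) (hb : 0 < b) (hab : a + b = 1)
    (h₁ : x₁ ∈ goodSet p t₁) (h₂ : x₂ ∈ goodSet p t₂) :
    a * x₁ + b * x₂ ∈ goodSet p (a * t₁ + b * t₂) := by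
  rw [mem_goodSet_iff] at h₁ h₂ ⊢
  obtain ⟨f₁, hf₁, hn₁, h01, e₁⟩ := h₁
  obtain ⟨f₂, hf₂, hn₂, h02, e₂⟩ := h₂
  have d₁ : DifferentiableAt ℂ f₁ 0 :=
    hf₁.differentiableAt (isOpen_ball.mem_nhds (Metric.mem_ball_self zero_lt_one))
  have d₂ : DifferentiableAt ℂ f₂ 0 :=
    hf₂.differentiableAt (isOpen_ball.mem_nhds (Metric.mem_ball_self zero_lt_one))
  refine ⟨fun z => (a:ℂ) * f₁ z + (b:ℂ) * f₂ z,
    ((differentiableOn_const _).mul hf₁).add ((differentiableOn_const _).mul hf₂),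
    hpNorm_comb_le hp ha.le hb.le hab hf₁ hn₁ hf₂ hn₂, ?_, ?_⟩
  · show (a:ℂ) * f₁ 0 + (b:ℂ) * f₂ 0 = _
    rw [h01, h02]; push_cast; ring
  · have hder : deriv (fun z => (a:ℂ) * f₁ z + (b:ℂ) * f₂ z) 0
        = (a:ℂ) * deriv f₁ 0 + (b:ℂ) * deriv f₂ 0 := by
      rw [deriv_fun_add (d₁.const_mul _) (d₂.const_mul _), deriv_const_mul _ d₁,
        deriv_const_mul _ d₂]
    rw [hder, Complex.add_re, Complex.re_ofReal_mul, Complex.re_ofReal_mul, e₁, e₂]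

lemma Phi_concave (hp : 1 ≤ p) : ConcaveOn ℝ (Set.Icc (0:ℝ) 1) (fun t => Phi 1 p t) := by
  refine ⟨convex_Icc 0 1, ?_⟩
  intro t₁ h₁ t₂ h₂ a b ha hb hab
  simp only [smul_eq_mul]
  rcases ha.eq_or_lt with rfl | ha'
  · rw [zero_add] at hab; subst hab; simp
  rcases hb.eq_or_lt with rfl | hb'
  · rw [add_zero] at hab; subst hab; simp
  have hne₁ : (goodSet p t₁).Nonempty := ⟨0, zero_mem_goodSet hp h₁⟩
  have hne₂ : (goodSet p t₂).Nonempty := ⟨0, zero_mem_goodSet hp h₂⟩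
  have key : ∀ x₁ ∈ goodSet p t₁, ∀ x₂ ∈ goodSet p t₂,
      a * x₁ + b * x₂ ≤ Phi 1 p (a * t₁ + b * t₂) := fun x₁ hx₁ x₂ hx₂ => by
    rw [Phi_eq_sSup]
    exact le_csSup (bddAbove_goodSet hp) (comb_mem hp ha' hb' hab hx₁ hx₂)
  have step1 : ∀ x₂ ∈ goodSet p t₂,
      a * Phi 1 p t₁ + b * x₂ ≤ Phi 1 p (a * t₁ + b * t₂) := by
    intro x₂ hx₂
    have hsup : Phi 1 p t₁ ≤ (Phi 1 p (a * t₁ + b * t₂) - b * x₂) / a := by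
      rw [Phi_eq_sSup]
      refine csSup_le hne₁ fun x₁ hx₁ => ?_
      rw [le_div_iff₀ ha']
      have := key x₁ hx₁ x₂ hx₂; linarith
    rw [le_div_iff₀ ha'] at hsup; linarith
  have step2 : Phi 1 p t₂ ≤ (Phi 1 p (a * t₁ + b * t₂) - a * Phi 1 p t₁) / b := by
    rw [Phi_eq_sSup]
    refine csSup_le hne₂ fun x₂ hx₂ => ?_
    rw [le_div_iff₀ hb']
    have := step1 x₂ hx₂; linarith
  rw [le_div_iff₀ hb'] at step2; linarith

end Concave

section Final
open Set Filter

variable {p : ℝ}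

lemma Phi_antitone (hp : 1 ≤ p) : AntitoneOn (fun t => Phi 1 p t) (Set.Icc 0 1) := by
  intro s hs t ht hst
  rcases eq_or_lt_of_le ht.1 with h0 | h0
  · have hs0 : s = t := le_antisymm hst (h0 ▸ hs.1)
    rw [hs0]
  · set lam := s / t with hlam
    have hlam0 : 0 ≤ lam := div_nonneg hs.1 h0.le
    have hlam1 : lam ≤ 1 := (div_le_one h0).2 hst
    have hcomb := (Phi_concave hp).2 (⟨le_refl 0, zero_le_one⟩ : (0:ℝ) ∈ Set.Icc 0 1) ht
      (by linarith : (0:ℝ) ≤ 1 - lam) hlam0 (by ring)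
    have harg : (1 - lam) • (0:ℝ) + lam • t = s := by
      simp only [smul_eq_mul, mul_zero, zero_add]
      rw [hlam]; exact div_mul_cancel₀ s h0.ne'
    rw [harg] at hcomb
    simp only [smul_eq_mul] at hcomb
    rw [Phi_zero_eq hp] at hcomb
    have hle1 : Phi 1 p t ≤ 1 := Phi_le_one hp
    simp only
    nlinarith

lemma Phi_chord (hp : 1 ≤ p) : ∀ t ∈ Set.Icc (0:ℝ) 1, 1 - t ≤ Phi 1 p t := by
  intro t ht
  have hcomb := (Phi_concave hp).2 (⟨le_refl 0, zero_le_one⟩ : (0:ℝ) ∈ Set.Icc 0 1)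
    (⟨zero_le_one, le_refl 1⟩ : (1:ℝ) ∈ Set.Icc 0 1)
    (by linarith [ht.2] : (0:ℝ) ≤ 1 - t) ht.1 (by ring)
  simp only [smul_eq_mul, mul_zero, mul_one, zero_add] at hcomb
  rw [Phi_zero_eq hp, Phi_one_eq hp] at hcomb
  linarith

lemma Phi_le_sqrt (hp : 1 ≤ p) : ∀ t ∈ Set.Icc (0:ℝ) 1, Phi 1 p t ≤ 3 * Real.sqrt (1 - t) := by
  intro t ht
  rcases eq_or_lt_of_le ht.2 with h1 | h1
  · rw [h1, Phi_one_eq hp]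
    simp
  · set s := Real.sqrt (1-t) with hsdef
    have hs0 : 0 < s := Real.sqrt_pos.2 (by linarith)
    have hs2 : s^2 = 1 - t := Real.sq_sqrt (by linarith)
    have hB := Phi_le_master hp ht (-(1/s))
    have hsq : Real.sqrt ((-(1/s))^2 + 4) ≤ 1/s + 2*s := by
      have hinv : 1/s * s = 1 := one_div_mul_cancel hs0.ne'
      have h2 : (-(1/s))^2 + 4 ≤ (1/s + 2*s)^2 := by nlinarith [sq_nonneg s, hinv]
      calc Real.sqrt ((-(1/s))^2+4) ≤ Real.sqrt ((1/s+2*s)^2) := Real.sqrt_le_sqrt h2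
        _ = 1/s + 2*s := Real.sqrt_sq (by positivity)
    have hfin : 1/s + 2*s - t/s = 3*s := by
      have e1 : 1/s + 2*s - t/s = (1-t)/s + 2*s := by ring
      rw [e1, ← hs2]
      field_simp
      ring
    calc Phi 1 p t ≤ Real.sqrt ((-(1/s))^2+4) + (-(1/s)) * t := hB
      _ ≤ (1/s + 2*s) + (-(1/s)) * t := by linarith
      _ = 1/s + 2*s - t/s := by ring
      _ = 3*s := hfin

lemma Phi_continuousOn (hp : 1 ≤ p) : ContinuousOn (fun t => Phi 1 p t) (Set.Icc 0 1) := by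
  intro x hx
  rcases eq_or_lt_of_le hx.1 with h0 | h0
  · have htend : Tendsto (fun t => Phi 1 p t) (nhdsWithin x (Set.Icc 0 1)) (nhds 1) := by
      apply tendsto_of_tendsto_of_tendsto_of_le_of_le' (g := fun t : ℝ => 1 - t)
        (h := fun _ : ℝ => (1:ℝ))
      · have : Tendsto (fun t : ℝ => 1 - t) (nhds x) (nhds 1) := by
          have hc : Continuous fun t : ℝ => 1 - t := by continuity
          simpa [← h0] using hc.tendsto x
        exact this.mono_left nhdsWithin_le_nhds
      · exact tendsto_const_nhds
      · exact eventually_nhdsWithin_of_forall (fun t ht => Phi_chord hp t ht)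
      · exact eventually_nhdsWithin_of_forall (fun t _ => Phi_le_one hp)
    have hval : Phi 1 p x = 1 := by rw [← h0]; exact Phi_zero_eq hp
    simpa [ContinuousWithinAt, hval] using htend
  rcases eq_or_lt_of_le hx.2 with h1 | h1
  · have htend : Tendsto (fun t => Phi 1 p t) (nhdsWithin x (Set.Icc 0 1)) (nhds 0) := by
      apply tendsto_of_tendsto_of_tendsto_of_le_of_le' (g := fun _ : ℝ => (0:ℝ))
        (h := fun t : ℝ => 3 * Real.sqrt (1 - t))
      · exact tendsto_const_nhds
      · have : Tendsto (fun t : ℝ => 3 * Real.sqrt (1 - t)) (nhds x) (nhds 0) := by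
          have hc : Continuous fun t : ℝ => 3 * Real.sqrt (1 - t) := by
            apply continuous_const.mul
            apply Real.continuous_sqrt.comp
            continuity
          simpa [h1] using hc.tendsto x
        exact this.mono_left nhdsWithin_le_nhds
      · exact eventually_nhdsWithin_of_forall (fun t ht => Phi_nonneg hp ht)
      · exact eventually_nhdsWithin_of_forall (fun t ht => Phi_le_sqrt hp t ht)
    have hval : Phi 1 p x = 0 := by rw [h1]; exact Phi_one_eq hp
    simpa [ContinuousWithinAt, hval] using htend
  · have hIoo : x ∈ Set.Ioo (0:ℝ) 1 := ⟨h0, h1⟩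
    have hco : ContinuousOn (fun t => Phi 1 p t) (Set.Ioo 0 1) :=
      ((Phi_concave hp).subset Set.Ioo_subset_Icc_self (convex_Ioo 0 1)).continuousOn isOpen_Ioo
    exact (hco.continuousAt (isOpen_Ioo.mem_nhds hIoo)).continuousWithinAt


theorem phi_one_decreasing (p : ℝ) (hp : 1 ≤ p) :
    AntitoneOn (fun t => Phi 1 p t) (Set.Icc 0 1)
    ∧ Phi 1 p 0 = 1 ∧ Phi 1 p 1 = 0
    ∧ ∀ y ∈ Set.Icc (0 : ℝ) 1, ∃ t ∈ Set.Icc (0 : ℝ) 1, Phi 1 p t = y := by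

  refine ⟨Phi_antitone hp, Phi_zero_eq hp, Phi_one_eq hp, ?_⟩
  intro y hy
  have hiv := intermediate_value_Icc' (zero_le_one (α := ℝ)) (Phi_continuousOn hp)
  rw [Phi_one_eq hp, Phi_zero_eq hp] at hiv
  obtain ⟨t, htI, hft⟩ := hiv hy
  exact ⟨t, htI, hft⟩

end Final
end

section
/- Fix 0 < p < 1 and set α₂ = √(p/(2−p)). Let α₁ be the unique solution in (0,1) of 1 + α² = 2α^p. Suppose α₁ < α < α₂ and α₂ < α̃ < 1 satisfy α(1+α²)^{−1/p} = α̃(1+α̃²)^{−1/p}. Then 1/α + α(2/p − 1) > 1/α̃ + α̃(2/p − 1). -/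
set_option maxHeartbeats 800000

open Real Set

lemma Fderiv_aux (p x : ℝ) (hx : 0 < x) :
    HasDerivAt (fun y : ℝ => Real.log y - (1/p) * Real.log (1 + y^2))
      (1/x - (1/p) * (2*x/(1+x^2))) x := by
  have h1 : HasDerivAt Real.log (1/x) x := by
    simpa [one_div] using Real.hasDerivAt_log (ne_of_gt hx)
  have hq : HasDerivAt (fun y : ℝ => 1 + y^2) (2*x) x := by
    simpa using ((hasDerivAt_pow 2 x).const_add 1)
  have hpos : (0:ℝ) < 1 + x^2 := by positivity
  have h2 : HasDerivAt (fun y : ℝ => Real.log (1 + y^2)) (2*x/(1+x^2)) x := by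
    have := (Real.hasDerivAt_log (ne_of_gt hpos)).comp x hq
    simpa [div_eq_inv_mul, mul_comm, Function.comp_def] using this
  exact h1.sub (h2.const_mul (1/p))

theorem small_root_is_bigger (p a1 a a' : ℝ) (hp0 : 0 < p) (hp1 : p < 1)
    (ha1 : a1 ∈ Set.Ioo (0 : ℝ) 1) (ha1eq : 1 + a1 ^ 2 = 2 * a1 ^ p)
    (h1 : a1 < a) (h2 : a < Real.sqrt (p / (2 - p)))
    (h3 : Real.sqrt (p / (2 - p)) < a') (h4 : a' < 1)
    (heq : a * (1 + a ^ 2) ^ (-(1 / p)) = a' * (1 + a' ^ 2) ^ (-(1 / p))) :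
    1 / a + a * (2 / p - 1) > 1 / a' + a' * (2 / p - 1) := by
  have h2p : (0:ℝ) < 2 - p := by linarith
  set c : ℝ := p / (2 - p) with hcdef
  set s : ℝ := Real.sqrt c with hsdef
  have hc0 : 0 < c := div_pos hp0 h2p
  have hc1 : c < 1 := (div_lt_one h2p).2 (by linarith)
  have hcp : c * (2 - p) = p := by rw [hcdef]; field_simp [ne_of_gt h2p]
  have hs0 : 0 < s := Real.sqrt_pos.2 hc0
  have hs2 : s ^ 2 = c := Real.sq_sqrt hc0.le
  have ha0 : 0 < a := lt_trans ha1.1 h1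
  have ha'0 : 0 < a' := lt_trans hs0 h3
  set F : ℝ → ℝ := fun y => Real.log y - (1/p) * Real.log (1 + y^2) with hF
  -- F a = F a'
  have hpa : (0:ℝ) < 1 + a^2 := by positivity
  have hpa' : (0:ℝ) < 1 + a'^2 := by positivity
  have hFeq : F a = F a' := by
    have e1 : Real.log (a * (1 + a ^ 2) ^ (-(1 / p))) =
        Real.log a + (-(1/p)) * Real.log (1 + a^2) := by
      rw [Real.log_mul (ne_of_gt ha0) (ne_of_gt (Real.rpow_pos_of_pos hpa _)),
        Real.log_rpow hpa]
    have e2 : Real.log (a' * (1 + a' ^ 2) ^ (-(1 / p))) =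
        Real.log a' + (-(1/p)) * Real.log (1 + a'^2) := by
      rw [Real.log_mul (ne_of_gt ha'0) (ne_of_gt (Real.rpow_pos_of_pos hpa' _)),
        Real.log_rpow hpa']
    have := congrArg Real.log heq
    rw [e1, e2] at this
    simp only [hF]
    linarith
  -- F strictly monotone on Ioc 0 s
  have mono1 : StrictMonoOn F (Set.Ioc 0 s) := by
    apply strictMonoOn_of_deriv_pos (convex_Ioc 0 s)
    · exact fun x hx => (Fderiv_aux p x hx.1).continuousAt.continuousWithinAt
    · intro x hx
      rw [interior_Ioc] at hx
      rw [(Fderiv_aux p x hx.1).deriv]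
      have hx0 := hx.1
      have hx2 : x^2 < c := by
        calc x^2 < s^2 := by nlinarith [hx.2]
        _ = c := hs2
      have e : (1/p) * (2*x/(1+x^2)) = 2*x/(p*(1+x^2)) := by
        field_simp
      rw [sub_pos, e, div_lt_div_iff₀ (by positivity) hx0]
      nlinarith [hx2]
  -- psi strictly monotone on Ici s
  have mono2 : StrictMonoOn (fun y => F (c/y) - F y) (Set.Ici s) := by
    apply strictMonoOn_of_deriv_pos (convex_Ici s)
    · intro x hx
      have hx0 : 0 < x := lt_of_lt_of_le hs0 hx
      have hcx : 0 < c / x := div_pos hc0 hx0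
      have hinv : HasDerivAt (fun y : ℝ => c / y) (-(c/x^2)) x := by
        have := (hasDerivAt_inv (ne_of_gt hx0)).const_mul c
        simpa [div_eq_mul_inv, mul_comm, neg_div] using this
      have hcomp := ((Fderiv_aux p (c/x) hcx).comp x hinv).sub (Fderiv_aux p x hx0)
      exact hcomp.continuousAt.continuousWithinAt
    · intro x hx
      rw [interior_Ici] at hx
      have hx0 : 0 < x := lt_trans hs0 hx
      have hcx : 0 < c / x := div_pos hc0 hx0
      have hinv : HasDerivAt (fun y : ℝ => c / y) (-(c/x^2)) x := by
        have := (hasDerivAt_inv (ne_of_gt hx0)).const_mul c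
        simpa [div_eq_mul_inv, mul_comm, neg_div] using this
      have hcomp := ((Fderiv_aux p (c/x) hcx).comp x hinv).sub (Fderiv_aux p x hx0)
      have hcomp2 : HasDerivAt (fun y => F (c/y) - F y)
          ((1 / (c / x) - 1 / p * (2 * (c / x) / (1 + (c / x) ^ 2))) * -(c / x ^ 2) -
            (1 / x - 1 / p * (2 * x / (1 + x ^ 2)))) x := hcomp
      rw [hcomp2.deriv]
      have hsx : s < x := hx
      have hx2 : c < x^2 := by
        calc c = s^2 := hs2.symm
        _ < x^2 := by nlinarith [hsx, hs0]
      have key : (1/(c/x) - (1/p) * (2*(c/x)/(1+(c/x)^2))) * (-(c/x^2)) -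
          (1/x - (1/p) * (2*x/(1+x^2))) =
          2*(1-p)*(x^2-c)^2 / (p*x*(x^2+c^2)*(1+x^2)) := by
        rw [hcdef]
        field_simp
        ring
      rw [key]
      have h9 : (0:ℝ) < (x^2 - c)^2 := pow_pos (by linarith) 2
      apply div_pos (by nlinarith [h9]) (by positivity)
  -- key: a * a' < c
  have hca' : c / a' < s := by
    rw [div_lt_iff₀ ha'0]
    calc c = s * s := by nlinarith [hs2]
    _ < s * a' := by nlinarith [h3]
  have hca'0 : 0 < c / a' := div_pos hc0 ha'0
  have hpsi : (0:ℝ) < F (c/a') - F a' := by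
    have := mono2 (self_mem_Ici) (le_of_lt h3) h3
    simp only at this
    have hcs : c / s = s := by
      rw [div_eq_iff (ne_of_gt hs0)]
      nlinarith [hs2]
    rw [hcs] at this
    linarith
  have hFlt : F a < F (c/a') := by rw [hFeq]; linarith
  have haa' : a < c / a' := by
    by_contra hcon
    push_neg at hcon
    have := mono1.le_iff_le ⟨hca'0, le_of_lt hca'⟩ ⟨ha0, le_of_lt h2⟩
    have h' : F (c/a') ≤ F a := this.2 hcon
    linarith
  have hkey : a * a' < c := by
    rw [← lt_div_iff₀ ha'0] at *
    exact haa'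
  -- conclude
  have hlt : a < a' := lt_trans h2 h3
  have e : 1/a + a*(2/p-1) - (1/a' + a'*(2/p-1)) = (a'-a) * (1/(a*a') - (2-p)/p) := by
    field_simp [ne_of_gt ha0, ne_of_gt ha'0, ne_of_gt hp0]
    ring
  have hpos2 : 0 < 1/(a*a') - (2-p)/p := by
    rw [sub_pos, div_lt_div_iff₀ hp0 (by positivity)]
    nlinarith [hkey, hcp]
  have : 0 < (a'-a) * (1/(a*a') - (2-p)/p) := mul_pos (by linarith) hpos2
  linarith [e, this]
end
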